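/- Any two sequences of reductions of a scoring play game G by removing dominated options and bypassing reversible options, each terminating in a game with no dominated or reversible options, yield equivalent results: if G → G₁ → … → G_n and G → G₁' → … → G_m' are two such reduction sequences with G_n and G_m' in canonical form, then G_n ≡ G_m'. -/

import Mathlib

inductive SGame : Type where
  | mk (left right : List SGame) (score : ℝ)

namespace SGame

def leftOpts : SGame → List SGame | mk L _ _ => L
def rightOpts : SGame → List SGame | mk _ R _ => R
def score : SGame → ℝ | mk _ _ s => s

mutual
  /-- Optimal final score when Left moves first. -/
  def leftScore : SGame → ℝ
    | mk [] _ s => s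
    | mk (g :: L) _ _ => maxRight g L
  termination_by G => sizeOf G
  decreasing_by all_goals (simp; try omega)
  def maxRight : SGame → List SGame → ℝ
    | g, [] => rightScore g
    | g, h :: t => max (rightScore g) (maxRight h t)
  termination_by g l => 1 + sizeOf g + sizeOf l
  decreasing_by all_goals (simp; try omega)
  /-- Optimal final score when Right moves first. -/
  def rightScore : SGame → ℝ
    | mk _ [] s => s
    | mk _ (g :: R) _ => minLeft g R
  termination_by G => sizeOf G
  decreasing_by all_goals (simp; try omega)
  def minLeft : SGame → List SGame → ℝ
    | g, [] => leftScore g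
    | g, h :: t => min (leftScore g) (minLeft h t)
  termination_by g l => 1 + sizeOf g + sizeOf l
  decreasing_by all_goals (simp; try omega)
end

/-- Long-rule disjunctive sum. -/
def sum : SGame → SGame → SGame
  | mk L1 R1 s1, mk L2 R2 s2 =>
    mk ((L1.attach.map fun g => sum g.1 (mk L2 R2 s2)) ++
        (L2.attach.map fun h => sum (mk L1 R1 s1) h.1))
       ((R1.attach.map fun g => sum g.1 (mk L2 R2 s2)) ++
        (R2.attach.map fun h => sum (mk L1 R1 s1) h.1))
       (s1 + s2)
termination_by G H => sizeOf G + sizeOf H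
decreasing_by
  all_goals simp
  · have := List.sizeOf_lt_of_mem g.2; omega
  · have := List.sizeOf_lt_of_mem h.2; omega
  · have := List.sizeOf_lt_of_mem g.2; omega
  · have := List.sizeOf_lt_of_mem h.2; omega

end SGame

namespace SGame

/-- The game `{.|0|.}`. -/
def zero : SGame := mk [] [] 0

/-- Negation: `-G = {-G^R | -G^S | -G^L}`. -/
def neg : SGame → SGame
  | mk L R s =>
    mk (R.attach.map fun g => neg g.1) (L.attach.map fun g => neg g.1) (-s)
termination_by G => sizeOf G
decreasing_by
  all_goals (have := List.sizeOf_lt_of_mem g.2; simp; omega)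

/-- Identity of game trees (options regarded as sets). -/
def Ident : SGame → SGame → Prop
  | mk L1 R1 s1, mk L2 R2 s2 =>
    s1 = s2 ∧
    (∀ g ∈ L1.attach, ∃ h ∈ L2.attach, Ident g.1 h.1) ∧
    (∀ h ∈ L2.attach, ∃ g ∈ L1.attach, Ident g.1 h.1) ∧
    (∀ g ∈ R1.attach, ∃ h ∈ R2.attach, Ident g.1 h.1) ∧
    (∀ h ∈ R2.attach, ∃ g ∈ R1.attach, Ident g.1 h.1)
termination_by G H => sizeOf G + sizeOf H
decreasing_by
  all_goals
    (have := List.sizeOf_lt_of_mem g.2; have := List.sizeOf_lt_of_mem h.2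
     simp; omega)

inductive Outcome : Type where
  | L | R | N | P | T
deriving DecidableEq

/-- The outcome class of a game, determined by the signs of its final scores. -/
noncomputable def outcome (G : SGame) : Outcome :=
  if 0 < G.leftScore then
    (if 0 < G.rightScore then .L else if G.rightScore = 0 then .L else .N)
  else if G.leftScore = 0 then
    (if 0 < G.rightScore then .L else if G.rightScore = 0 then .T else .R)
  else
    (if 0 < G.rightScore then .P else .R)

/-- `G ≥ H`. -/
def Ge (G H : SGame) : Prop :=
  ∀ X : SGame,
    (0 ≤ (H.sum X).leftScore → 0 ≤ (G.sum X).leftScore) ∧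
    (0 ≤ (H.sum X).rightScore → 0 ≤ (G.sum X).rightScore) ∧
    (0 < (H.sum X).leftScore → 0 < (G.sum X).leftScore) ∧
    (0 < (H.sum X).rightScore → 0 < (G.sum X).rightScore)

/-- `G ≤ H`. -/
def Le (G H : SGame) : Prop :=
  ∀ X : SGame,
    ((H.sum X).leftScore ≤ 0 → (G.sum X).leftScore ≤ 0) ∧
    ((H.sum X).rightScore ≤ 0 → (G.sum X).rightScore ≤ 0) ∧
    ((H.sum X).leftScore < 0 → (G.sum X).leftScore < 0) ∧
    ((H.sum X).rightScore < 0 → (G.sum X).rightScore < 0)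

/-- Game equality: same outcome in every disjunctive-sum context. -/
def gameEq (G H : SGame) : Prop :=
  ∀ X : SGame, (G.sum X).outcome = (H.sum X).outcome

end SGame

namespace SGame

/-- Every score in the game tree of `G` satisfies `p`. -/
def AllScores (p : ℝ → Prop) : SGame → Prop
  | mk L R s =>
    p s ∧ (∀ g ∈ L.attach, AllScores p g.1) ∧ (∀ g ∈ R.attach, AllScores p g.1)
termination_by G => sizeOf G
decreasing_by all_goals (have := List.sizeOf_lt_of_mem g.2; simp; omega)

/-- `G ≡ H`: identical underlying game trees, with equal scores at all
termination vertices (vertices at which at least one player has no option,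
i.e. where the play of some disjunctive sum can end). -/
def Equiv : SGame → SGame → Prop
  | mk L1 R1 s1, mk L2 R2 s2 =>
    ((L1 = [] ∨ R1 = []) → s1 = s2) ∧
    (∀ g ∈ L1.attach, ∃ h ∈ L2.attach, Equiv g.1 h.1) ∧
    (∀ h ∈ L2.attach, ∃ g ∈ L1.attach, Equiv g.1 h.1) ∧
    (∀ g ∈ R1.attach, ∃ h ∈ R2.attach, Equiv g.1 h.1) ∧
    (∀ h ∈ R2.attach, ∃ g ∈ R1.attach, Equiv g.1 h.1)
termination_by G H => sizeOf G + sizeOf H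
decreasing_by
  all_goals
    (have := List.sizeOf_lt_of_mem g.2; have := List.sizeOf_lt_of_mem h.2
     simp; omega)

/-- `G` is in canonical form: hereditarily, no dominated and no reversible options. -/
def Canonical : SGame → Prop
  | mk L R s =>
    (∀ A ∈ L, ∀ B ∈ L, A ≠ B → ¬ Ge A B) ∧
    (∀ D ∈ R, ∀ E ∈ R, D ≠ E → ¬ Le D E) ∧
    (∀ A ∈ L, ∀ Ar ∈ A.rightOpts, ¬ Le Ar (mk L R s)) ∧
    (∀ D ∈ R, ∀ Dl ∈ D.leftOpts, ¬ Ge Dl (mk L R s)) ∧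
    (∀ g ∈ L.attach, Canonical g.1) ∧ (∀ g ∈ R.attach, Canonical g.1)
termination_by G => sizeOf G
decreasing_by all_goals (have := List.sizeOf_lt_of_mem g.2; simp; omega)

/-- One reduction step: removing a dominated option or bypassing a reversible
option, at the root or in some subposition. -/
inductive Step : SGame → SGame → Prop where
  | domL {L1 L2 : List SGame} {R : List SGame} {s : ℝ} {B : SGame} (A : SGame)
      (hA : A ∈ L1 ++ L2) (h : Ge A B) :
      Step (mk (L1 ++ B :: L2) R s) (mk (L1 ++ L2) R s)
  | domR {R1 R2 : List SGame} {L : List SGame} {s : ℝ} {E : SGame} (D : SGame)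
      (hD : D ∈ R1 ++ R2) (h : Le D E) :
      Step (mk L (R1 ++ E :: R2) s) (mk L (R1 ++ R2) s)
  | revL {L1 L2 : List SGame} {R : List SGame} {s : ℝ} {A Ar : SGame}
      (hAr : Ar ∈ A.rightOpts) (h : Le Ar (mk (L1 ++ A :: L2) R s)) :
      Step (mk (L1 ++ A :: L2) R s) (mk (L1 ++ Ar.leftOpts ++ L2) R s)
  | revR {R1 R2 : List SGame} {L : List SGame} {s : ℝ} {D Dl : SGame}
      (hDl : Dl ∈ D.leftOpts) (h : Ge Dl (mk L (R1 ++ D :: R2) s)) :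
      Step (mk L (R1 ++ D :: R2) s) (mk L (R1 ++ Dl.rightOpts ++ R2) s)
  | congL {g g' : SGame} {L1 L2 R : List SGame} {s : ℝ} (h : Step g g') :
      Step (mk (L1 ++ g :: L2) R s) (mk (L1 ++ g' :: L2) R s)
  | congR {g g' : SGame} {L R1 R2 : List SGame} {s : ℝ} (h : Step g g') :
      Step (mk L (R1 ++ g :: R2) s) (mk L (R1 ++ g' :: R2) s)

set_option linter.dupNamespace false
set_option linter.unnecessarySeqFocus false
set_option maxHeartbeats 2000000

@[simp] lemma leftOpts_mk (L R s) : leftOpts (mk L R s) = L := rfl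
@[simp] lemma rightOpts_mk (L R s) : rightOpts (mk L R s) = R := rfl
@[simp] lemma score_mk (L R s) : score (mk L R s) = s := rfl

lemma leftScore_nil (R s) : leftScore (mk [] R s) = s := by rw [leftScore]
lemma leftScore_cons (a L R s) : leftScore (mk (a :: L) R s) = maxRight a L := by rw [leftScore]
lemma rightScore_nil (L s) : rightScore (mk L [] s) = s := by rw [rightScore]
lemma rightScore_cons (a R L s) : rightScore (mk L (a :: R) s) = minLeft a R := by rw [rightScore]

lemma exists_maxRight (a : SGame) (l : List SGame) :
    ∃ h ∈ a :: l, maxRight a l = rightScore h := by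
  induction l generalizing a with
  | nil => exact ⟨a, by simp, by rw [maxRight]⟩
  | cons b t ih =>
    rw [maxRight]
    rcases ih b with ⟨h, hm, he⟩
    rcases le_total (rightScore a) (maxRight b t) with hc | hc
    · exact ⟨h, by simpa using Or.inr hm, by rw [max_eq_right hc, he]⟩
    · exact ⟨a, by simp, by rw [max_eq_left hc]⟩

lemma le_maxRight {h : SGame} {a : SGame} {l : List SGame} (hm : h ∈ a :: l) :
    rightScore h ≤ maxRight a l := by
  induction l generalizing a with
  | nil => simp at hm; subst hm; rw [maxRight]
  | cons b t ih =>
    rw [maxRight]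
    rcases List.mem_cons.1 hm with rfl | hm'
    · exact le_max_left _ _
    · exact le_trans (ih hm') (le_max_right _ _)

lemma exists_minLeft (a : SGame) (l : List SGame) :
    ∃ h ∈ a :: l, minLeft a l = leftScore h := by
  induction l generalizing a with
  | nil => exact ⟨a, by simp, by rw [minLeft]⟩
  | cons b t ih =>
    rw [minLeft]
    rcases ih b with ⟨h, hm, he⟩
    rcases le_total (minLeft b t) (leftScore a) with hc | hc
    · exact ⟨h, by simpa using Or.inr hm, by rw [min_eq_right hc, he]⟩
    · exact ⟨a, by simp, by rw [min_eq_left hc]⟩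

lemma minLeft_le {h : SGame} {a : SGame} {l : List SGame} (hm : h ∈ a :: l) :
    minLeft a l ≤ leftScore h := by
  induction l generalizing a with
  | nil => simp at hm; subst hm; rw [minLeft]
  | cons b t ih =>
    rw [minLeft]
    rcases List.mem_cons.1 hm with rfl | hm'
    · exact min_le_left _ _
    · exact le_trans (min_le_right _ _) (ih hm')

/-- leftScore facts for general games. -/
lemma leftScore_of_empty {G : SGame} (h : G.leftOpts = []) : G.leftScore = G.score := by
  cases G with | mk L R s => subst h; exact leftScore_nil R s

lemma exists_leftScore {G : SGame} (h : G.leftOpts ≠ []) :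
    ∃ A ∈ G.leftOpts, G.leftScore = A.rightScore := by
  cases G with
  | mk L R s =>
    cases L with
    | nil => simp at h
    | cons a l => rw [leftScore_cons]; exact exists_maxRight a l

lemma rightScore_le_leftScore {G A : SGame} (h : A ∈ G.leftOpts) :
    A.rightScore ≤ G.leftScore := by
  cases G with
  | mk L R s =>
    cases L with
    | nil => simp at h
    | cons a l => rw [leftScore_cons]; exact le_maxRight h

lemma rightScore_of_empty {G : SGame} (h : G.rightOpts = []) : G.rightScore = G.score := by
  cases G with | mk L R s => subst h; exact rightScore_nil L s

lemma exists_rightScore {G : SGame} (h : G.rightOpts ≠ []) :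
    ∃ D ∈ G.rightOpts, G.rightScore = D.leftScore := by
  cases G with
  | mk L R s =>
    cases R with
    | nil => simp at h
    | cons a l => rw [rightScore_cons]; exact exists_minLeft a l

lemma rightScore_le_leftScore' {G D : SGame} (h : D ∈ G.rightOpts) :
    G.rightScore ≤ D.leftScore := by
  cases G with
  | mk L R s =>
    cases R with
    | nil => simp at h
    | cons a l => rw [rightScore_cons]; exact minLeft_le h

/-- sum lemmas -/
lemma sum_leftOpts (G X : SGame) :
    (G.sum X).leftOpts = G.leftOpts.map (fun A => A.sum X) ++ X.leftOpts.map (fun Y => G.sum Y) := by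
  cases G with
  | mk L1 R1 s1 =>
    cases X with
    | mk L2 R2 s2 => rw [sum]; simp [List.attach_map_val]

lemma sum_rightOpts (G X : SGame) :
    (G.sum X).rightOpts = G.rightOpts.map (fun A => A.sum X) ++ X.rightOpts.map (fun Y => G.sum Y) := by
  cases G with
  | mk L1 R1 s1 =>
    cases X with
    | mk L2 R2 s2 => rw [sum]; simp [List.attach_map_val]

lemma sum_score (G X : SGame) : (G.sum X).score = G.score + X.score := by
  cases G with
  | mk L1 R1 s1 =>
    cases X with
    | mk L2 R2 s2 => rw [sum]; rfl

/-- sign characterizations -/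
lemma ls_nonneg_iff {P : SGame} :
    0 ≤ P.leftScore ↔ ((P.leftOpts = [] ∧ 0 ≤ P.score) ∨ ∃ A ∈ P.leftOpts, 0 ≤ A.rightScore) := by
  constructor
  · intro h
    by_cases he : P.leftOpts = []
    · exact Or.inl ⟨he, by rwa [leftScore_of_empty he] at h⟩
    · rcases exists_leftScore he with ⟨A, hA, hE⟩
      exact Or.inr ⟨A, hA, by rwa [hE] at h⟩
  · rintro (⟨he, hs⟩ | ⟨A, hA, hA0⟩)
    · rwa [leftScore_of_empty he]
    · exact le_trans hA0 (rightScore_le_leftScore hA)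

lemma ls_pos_iff {P : SGame} :
    0 < P.leftScore ↔ ((P.leftOpts = [] ∧ 0 < P.score) ∨ ∃ A ∈ P.leftOpts, 0 < A.rightScore) := by
  constructor
  · intro h
    by_cases he : P.leftOpts = []
    · exact Or.inl ⟨he, by rwa [leftScore_of_empty he] at h⟩
    · rcases exists_leftScore he with ⟨A, hA, hE⟩
      exact Or.inr ⟨A, hA, by rwa [hE] at h⟩
  · rintro (⟨he, hs⟩ | ⟨A, hA, hA0⟩)
    · rwa [leftScore_of_empty he]
    · exact lt_of_lt_of_le hA0 (rightScore_le_leftScore hA)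

lemma rs_nonneg_iff {P : SGame} :
    0 ≤ P.rightScore ↔ ((P.rightOpts = [] → 0 ≤ P.score) ∧ ∀ D ∈ P.rightOpts, 0 ≤ D.leftScore) := by
  constructor
  · intro h
    refine ⟨fun he => by rwa [rightScore_of_empty he] at h,
      fun D hD => le_trans h (rightScore_le_leftScore' hD)⟩
  · rintro ⟨hs, hall⟩
    by_cases he : P.rightOpts = []
    · rw [rightScore_of_empty he]; exact hs he
    · rcases exists_rightScore he with ⟨D, hD, hE⟩
      rw [hE]; exact hall D hD

lemma rs_pos_iff {P : SGame} :
    0 < P.rightScore ↔ ((P.rightOpts = [] → 0 < P.score) ∧ ∀ D ∈ P.rightOpts, 0 < D.leftScore) := by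
  constructor
  · intro h
    refine ⟨fun he => by rwa [rightScore_of_empty he] at h,
      fun D hD => lt_of_lt_of_le h (rightScore_le_leftScore' hD)⟩
  · rintro ⟨hs, hall⟩
    by_cases he : P.rightOpts = []
    · rw [rightScore_of_empty he]; exact hs he
    · rcases exists_rightScore he with ⟨D, hD, hE⟩
      rw [hE]; exact hall D hD

lemma ls_nonpos_iff {P : SGame} :
    P.leftScore ≤ 0 ↔ ((P.leftOpts = [] → P.score ≤ 0) ∧ ∀ A ∈ P.leftOpts, A.rightScore ≤ 0) := by
  constructor
  · intro h
    refine ⟨fun he => by rwa [leftScore_of_empty he] at h,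
      fun A hA => le_trans (rightScore_le_leftScore hA) h⟩
  · rintro ⟨hs, hall⟩
    by_cases he : P.leftOpts = []
    · rw [leftScore_of_empty he]; exact hs he
    · rcases exists_leftScore he with ⟨A, hA, hE⟩
      rw [hE]; exact hall A hA

lemma ls_neg_iff {P : SGame} :
    P.leftScore < 0 ↔ ((P.leftOpts = [] → P.score < 0) ∧ ∀ A ∈ P.leftOpts, A.rightScore < 0) := by
  constructor
  · intro h
    refine ⟨fun he => by rwa [leftScore_of_empty he] at h,
      fun A hA => lt_of_le_of_lt (rightScore_le_leftScore hA) h⟩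
  · rintro ⟨hs, hall⟩
    by_cases he : P.leftOpts = []
    · rw [leftScore_of_empty he]; exact hs he
    · rcases exists_leftScore he with ⟨A, hA, hE⟩
      rw [hE]; exact hall A hA

lemma rs_nonpos_iff {P : SGame} :
    P.rightScore ≤ 0 ↔ ((P.rightOpts = [] ∧ P.score ≤ 0) ∨ ∃ D ∈ P.rightOpts, D.leftScore ≤ 0) := by
  constructor
  · intro h
    by_cases he : P.rightOpts = []
    · exact Or.inl ⟨he, by rwa [rightScore_of_empty he] at h⟩
    · rcases exists_rightScore he with ⟨D, hD, hE⟩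
      exact Or.inr ⟨D, hD, by rwa [hE] at h⟩
  · rintro (⟨he, hs⟩ | ⟨D, hD, hD0⟩)
    · rwa [rightScore_of_empty he]
    · exact le_trans (rightScore_le_leftScore' hD) hD0

lemma rs_neg_iff {P : SGame} :
    P.rightScore < 0 ↔ ((P.rightOpts = [] ∧ P.score < 0) ∨ ∃ D ∈ P.rightOpts, D.leftScore < 0) := by
  constructor
  · intro h
    by_cases he : P.rightOpts = []
    · exact Or.inl ⟨he, by rwa [rightScore_of_empty he] at h⟩
    · rcases exists_rightScore he with ⟨D, hD, hE⟩
      exact Or.inr ⟨D, hD, by rwa [hE] at h⟩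
  · rintro (⟨he, hs⟩ | ⟨D, hD, hD0⟩)
    · rwa [rightScore_of_empty he]
    · exact lt_of_le_of_lt (rightScore_le_leftScore' hD) hD0

/-- Adding an empty game shifts scores. -/
theorem sum_single (c : ℝ) : ∀ P : SGame,
    (P.sum (mk [] [] c)).leftScore = P.leftScore + c ∧
    (P.sum (mk [] [] c)).rightScore = P.rightScore + c
  | mk L R s => by
    have hL : (sum (mk L R s) (mk [] [] c)).leftOpts = L.map (fun A => A.sum (mk [] [] c)) := by
      rw [sum_leftOpts]; simp
    have hR : (sum (mk L R s) (mk [] [] c)).rightOpts = R.map (fun A => A.sum (mk [] [] c)) := by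
      rw [sum_rightOpts]; simp
    constructor
    · rcases List.eq_nil_or_concat' L with rfl | _
      · rw [leftScore_of_empty (by simp [hL]), sum_score, leftScore_nil]; rfl
      · have hne : L ≠ [] := by rintro rfl; simp_all
        apply le_antisymm
        · rcases exists_leftScore (G := sum (mk L R s) (mk [] [] c)) (by simp [hL, hne]) with ⟨A', hA', hE⟩
          rw [hL] at hA'
          rcases List.mem_map.1 hA' with ⟨A, hA, rfl⟩
          rw [hE, (sum_single c A).2]
          have := rightScore_le_leftScore (G := mk L R s) (A := A) hA
          linarith
        · rcases exists_leftScore (G := mk L R s) (by simpa using hne) with ⟨A, hA, hE⟩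
          have hm : A.sum (mk [] [] c) ∈ (sum (mk L R s) (mk [] [] c)).leftOpts := by
            rw [hL]; exact List.mem_map_of_mem hA
          have := rightScore_le_leftScore hm
          rw [(sum_single c A).2] at this
          linarith
    · rcases List.eq_nil_or_concat' R with rfl | _
      · rw [rightScore_of_empty (by simp [hR]), sum_score, rightScore_nil]; rfl
      · have hne : R ≠ [] := by rintro rfl; simp_all
        apply le_antisymm
        · rcases exists_rightScore (G := mk L R s) (by simpa using hne) with ⟨D, hD, hE⟩
          have hm : D.sum (mk [] [] c) ∈ (sum (mk L R s) (mk [] [] c)).rightOpts := by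
            rw [hR]; exact List.mem_map_of_mem hD
          have := rightScore_le_leftScore' hm
          rw [(sum_single c D).1] at this
          linarith
        · rcases exists_rightScore (G := sum (mk L R s) (mk [] [] c)) (by simp [hR, hne]) with ⟨D', hD', hE⟩
          rw [hR] at hD'
          rcases List.mem_map.1 hD' with ⟨D, hD, rfl⟩
          rw [hE, (sum_single c D).1]
          have := rightScore_le_leftScore' (G := mk L R s) (D := D) hD
          linarith
termination_by P => sizeOf P
decreasing_by
  all_goals
    (first
      | have h := List.sizeOf_lt_of_mem hA
      | have h := List.sizeOf_lt_of_mem hD) <;>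
    (simp at h ⊢; omega)

lemma mem_sum_ll {A P X : SGame} (h : A ∈ P.leftOpts) : A.sum X ∈ (P.sum X).leftOpts := by
  rw [sum_leftOpts]; exact List.mem_append_left _ (List.mem_map_of_mem h)
lemma mem_sum_lc {Y P X : SGame} (h : Y ∈ X.leftOpts) : P.sum Y ∈ (P.sum X).leftOpts := by
  rw [sum_leftOpts]; exact List.mem_append_right _ (List.mem_map_of_mem h)
lemma mem_sum_rl {A P X : SGame} (h : A ∈ P.rightOpts) : A.sum X ∈ (P.sum X).rightOpts := by
  rw [sum_rightOpts]; exact List.mem_append_left _ (List.mem_map_of_mem h)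
lemma mem_sum_rc {Y P X : SGame} (h : Y ∈ X.rightOpts) : P.sum Y ∈ (P.sum X).rightOpts := by
  rw [sum_rightOpts]; exact List.mem_append_right _ (List.mem_map_of_mem h)

lemma sum_leftOpts_cases {Q P X : SGame} (h : Q ∈ (P.sum X).leftOpts) :
    (∃ A ∈ P.leftOpts, Q = A.sum X) ∨ (∃ Y ∈ X.leftOpts, Q = P.sum Y) := by
  rw [sum_leftOpts] at h
  rcases List.mem_append.1 h with h | h
  · rcases List.mem_map.1 h with ⟨A, hA, rfl⟩; exact Or.inl ⟨A, hA, rfl⟩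
  · rcases List.mem_map.1 h with ⟨Y, hY, rfl⟩; exact Or.inr ⟨Y, hY, rfl⟩

lemma sum_rightOpts_cases {Q P X : SGame} (h : Q ∈ (P.sum X).rightOpts) :
    (∃ A ∈ P.rightOpts, Q = A.sum X) ∨ (∃ Y ∈ X.rightOpts, Q = P.sum Y) := by
  rw [sum_rightOpts] at h
  rcases List.mem_append.1 h with h | h
  · rcases List.mem_map.1 h with ⟨A, hA, rfl⟩; exact Or.inl ⟨A, hA, rfl⟩
  · rcases List.mem_map.1 h with ⟨Y, hY, rfl⟩; exact Or.inr ⟨Y, hY, rfl⟩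

lemma sum_leftOpts_nil {P X : SGame} :
    (P.sum X).leftOpts = [] ↔ P.leftOpts = [] ∧ X.leftOpts = [] := by
  rw [sum_leftOpts]; simp

lemma sum_rightOpts_nil {P X : SGame} :
    (P.sum X).rightOpts = [] ↔ P.rightOpts = [] ∧ X.rightOpts = [] := by
  rw [sum_rightOpts]; simp

lemma sizeOf_lt_of_mem_left {A P : SGame} (h : A ∈ P.leftOpts) : sizeOf A < sizeOf P := by
  cases P with
  | mk L R s =>
    have := List.sizeOf_lt_of_mem (by simpa using h : A ∈ L)
    simp; omega

lemma sizeOf_lt_of_mem_right {A P : SGame} (h : A ∈ P.rightOpts) : sizeOf A < sizeOf P := by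
  cases P with
  | mk L R s =>
    have := List.sizeOf_lt_of_mem (by simpa using h : A ∈ R)
    simp; omega

/-- Shifting a context by an empty game shifts scores of sums. -/
theorem sum_shift (c : ℝ) : ∀ P X : SGame,
    (P.sum (X.sum (mk [] [] c))).leftScore = (P.sum X).leftScore + c ∧
    (P.sum (X.sum (mk [] [] c))).rightScore = (P.sum X).rightScore + c := by
  intro P X
  have hXl : (X.sum (mk [] [] c)).leftOpts = X.leftOpts.map (fun Y => Y.sum (mk [] [] c)) := by
    rw [sum_leftOpts]; simp
  have hXr : (X.sum (mk [] [] c)).rightOpts = X.rightOpts.map (fun Y => Y.sum (mk [] [] c)) := by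
    rw [sum_rightOpts]; simp
  constructor
  · by_cases hne : (P.sum X).leftOpts = []
    · rcases sum_leftOpts_nil.1 hne with ⟨h1, h2⟩
      have h3 : (P.sum (X.sum (mk [] [] c))).leftOpts = [] := by
        rw [sum_leftOpts_nil]; exact ⟨h1, by simp [hXl, h2]⟩
      rw [leftScore_of_empty hne, leftScore_of_empty h3, sum_score, sum_score, sum_score]
      simp [score]; ring
    · have hne' : (P.sum (X.sum (mk [] [] c))).leftOpts ≠ [] := by
        rw [Ne, sum_leftOpts_nil]
        intro ⟨h1, h2⟩
        exact hne (sum_leftOpts_nil.2 ⟨h1, by simpa [hXl] using h2⟩)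
      apply le_antisymm
      · rcases exists_leftScore hne' with ⟨Q, hQ, hE⟩
        rw [hE]
        rcases sum_leftOpts_cases hQ with ⟨A, hA, rfl⟩ | ⟨Y', hY', rfl⟩
        · rw [(sum_shift c A X).2]
          have := rightScore_le_leftScore (mem_sum_ll (X := X) hA)
          linarith
        · rw [hXl] at hY'
          rcases List.mem_map.1 hY' with ⟨Y, hY, rfl⟩
          rw [(sum_shift c P Y).2]
          have := rightScore_le_leftScore (mem_sum_lc (P := P) hY)
          linarith
      · rcases exists_leftScore hne with ⟨Q, hQ, hE⟩
        rw [hE]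
        rcases sum_leftOpts_cases hQ with ⟨A, hA, rfl⟩ | ⟨Y, hY, rfl⟩
        · have hm : A.sum (X.sum (mk [] [] c)) ∈ (P.sum (X.sum (mk [] [] c))).leftOpts :=
            mem_sum_ll hA
          have := rightScore_le_leftScore hm
          rw [(sum_shift c A X).2] at this
          linarith
        · have hm : P.sum (Y.sum (mk [] [] c)) ∈ (P.sum (X.sum (mk [] [] c))).leftOpts := by
            apply mem_sum_lc; rw [hXl]; exact List.mem_map_of_mem hY
          have := rightScore_le_leftScore hm
          rw [(sum_shift c P Y).2] at this
          linarith
  · by_cases hne : (P.sum X).rightOpts = []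
    · rcases sum_rightOpts_nil.1 hne with ⟨h1, h2⟩
      have h3 : (P.sum (X.sum (mk [] [] c))).rightOpts = [] := by
        rw [sum_rightOpts_nil]; exact ⟨h1, by simp [hXr, h2]⟩
      rw [rightScore_of_empty hne, rightScore_of_empty h3, sum_score, sum_score, sum_score]
      simp [score]; ring
    · have hne' : (P.sum (X.sum (mk [] [] c))).rightOpts ≠ [] := by
        rw [Ne, sum_rightOpts_nil]
        intro ⟨h1, h2⟩
        exact hne (sum_rightOpts_nil.2 ⟨h1, by simpa [hXr] using h2⟩)
      apply le_antisymm
      · rcases exists_rightScore hne with ⟨Q, hQ, hE⟩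
        rw [hE]
        rcases sum_rightOpts_cases hQ with ⟨A, hA, rfl⟩ | ⟨Y, hY, rfl⟩
        · have hm : A.sum (X.sum (mk [] [] c)) ∈ (P.sum (X.sum (mk [] [] c))).rightOpts :=
            mem_sum_rl hA
          have := rightScore_le_leftScore' hm
          rw [(sum_shift c A X).1] at this
          linarith
        · have hm : P.sum (Y.sum (mk [] [] c)) ∈ (P.sum (X.sum (mk [] [] c))).rightOpts := by
            apply mem_sum_rc; rw [hXr]; exact List.mem_map_of_mem hY
          have := rightScore_le_leftScore' hm
          rw [(sum_shift c P Y).1] at this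
          linarith
      · rcases exists_rightScore hne' with ⟨Q, hQ, hE⟩
        rw [hE]
        rcases sum_rightOpts_cases hQ with ⟨A, hA, rfl⟩ | ⟨Y', hY', rfl⟩
        · rw [(sum_shift c A X).1]
          have := rightScore_le_leftScore' (mem_sum_rl (X := X) hA)
          linarith
        · rw [hXr] at hY'
          rcases List.mem_map.1 hY' with ⟨Y, hY, rfl⟩
          rw [(sum_shift c P Y).1]
          have := rightScore_le_leftScore' (mem_sum_rc (P := P) hY)
          linarith
termination_by P X => sizeOf P + sizeOf X
decreasing_by
  all_goals
    (first
      | (have h := sizeOf_lt_of_mem_left hA)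
      | (have h := sizeOf_lt_of_mem_right hA)
      | (have h := sizeOf_lt_of_mem_left hY)
      | (have h := sizeOf_lt_of_mem_right hY)) <;>
    omega

/-- Pointwise transfer of score signs from `G + X` to `H + X`. -/
def Tr (G H X : SGame) : Prop :=
  (0 ≤ (G.sum X).leftScore → 0 ≤ (H.sum X).leftScore) ∧
  (0 < (G.sum X).leftScore → 0 < (H.sum X).leftScore) ∧
  (0 ≤ (G.sum X).rightScore → 0 ≤ (H.sum X).rightScore) ∧
  (0 < (G.sum X).rightScore → 0 < (H.sum X).rightScore)

lemma ge_iff_tr {G H : SGame} : Ge G H ↔ ∀ X, Tr H G X := by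
  constructor
  · intro h X; rcases h X with ⟨h1, h2, h3, h4⟩; exact ⟨h1, h3, h2, h4⟩
  · intro h X; rcases h X with ⟨h1, h2, h3, h4⟩; exact ⟨h1, h3, h2, h4⟩

lemma le_iff_tr {G H : SGame} : Le G H ↔ ∀ X, Tr G H X := by
  constructor
  · intro h X
    obtain ⟨h1, h2, h3, h4⟩ := h X
    refine ⟨?_, ?_, ?_, ?_⟩
    · intro hx; by_contra hc; exact absurd (h3 (not_le.1 hc)) (not_lt.2 hx)
    · intro hx; by_contra hc; exact absurd (h1 (not_lt.1 hc)) (not_le.2 hx)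
    · intro hx; by_contra hc; exact absurd (h4 (not_le.1 hc)) (not_lt.2 hx)
    · intro hx; by_contra hc; exact absurd (h2 (not_lt.1 hc)) (not_le.2 hx)
  · intro h X
    obtain ⟨t1, t2, t3, t4⟩ := h X
    refine ⟨?_, ?_, ?_, ?_⟩
    · intro hx; by_contra hc; exact absurd (t2 (not_le.1 hc)) (not_lt.2 hx)
    · intro hx; by_contra hc; exact absurd (t4 (not_le.1 hc)) (not_lt.2 hx)
    · intro hx; by_contra hc; exact absurd (t1 (not_lt.1 hc)) (not_le.2 hx)
    · intro hx; by_contra hc; exact absurd (t3 (not_lt.1 hc)) (not_le.2 hx)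

lemma le_iff_ge {G H : SGame} : Le G H ↔ Ge H G := by
  rw [le_iff_tr, ge_iff_tr]

lemma tr_refl (G X : SGame) : Tr G G X :=
  ⟨id, id, id, id⟩

lemma tr_trans {G H K X : SGame} (h1 : Tr G H X) (h2 : Tr H K X) : Tr G K X :=
  ⟨fun h => h2.1 (h1.1 h), fun h => h2.2.1 (h1.2.1 h),
   fun h => h2.2.2.1 (h1.2.2.1 h), fun h => h2.2.2.2 (h1.2.2.2 h)⟩

lemma ge_trans {G H K : SGame} (h1 : Ge G H) (h2 : Ge H K) : Ge G K := by
  rw [ge_iff_tr] at *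
  exact fun X => tr_trans (h2 X) (h1 X)

/-- Equality of games. -/
def Sim (G H : SGame) : Prop := ∀ X, Tr G H X ∧ Tr H G X

lemma sim_refl (G : SGame) : Sim G G := fun X => ⟨tr_refl G X, tr_refl G X⟩
lemma sim_symm {G H : SGame} (h : Sim G H) : Sim H G := fun X => ⟨(h X).2, (h X).1⟩
lemma sim_trans {G H K : SGame} (h1 : Sim G H) (h2 : Sim H K) : Sim G K :=
  fun X => ⟨tr_trans (h1 X).1 (h2 X).1, tr_trans (h2 X).2 (h1 X).2⟩

lemma sim_ge₁ {G H : SGame} (h : Sim G H) : Ge G H := ge_iff_tr.2 fun X => (h X).2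
lemma sim_ge₂ {G H : SGame} (h : Sim G H) : Ge H G := ge_iff_tr.2 fun X => (h X).1

/-- `Le`/`Ge` only depend on the second argument up to `Sim`. -/
lemma le_congr {P G H : SGame} (hGH : Sim G H) (h : Le P G) : Le P H := by
  rw [le_iff_tr] at h ⊢
  exact fun X => tr_trans (h X) ((hGH X).1)

lemma ge_congr {P G H : SGame} (hGH : Sim G H) (h : Ge P G) : Ge P H := by
  rw [ge_iff_tr] at h ⊢
  exact fun X => tr_trans ((hGH X).2) (h X)

lemma ls_iff {p : ℝ → Prop} (hp : ∀ {x y : ℝ}, x ≤ y → p x → p y) {P : SGame} :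
    p P.leftScore ↔ ((P.leftOpts = [] ∧ p P.score) ∨ ∃ A ∈ P.leftOpts, p A.rightScore) := by
  constructor
  · intro h
    by_cases he : P.leftOpts = []
    · exact Or.inl ⟨he, by rwa [leftScore_of_empty he] at h⟩
    · rcases exists_leftScore he with ⟨A, hA, hE⟩
      exact Or.inr ⟨A, hA, by rwa [hE] at h⟩
  · rintro (⟨he, hs⟩ | ⟨A, hA, hA0⟩)
    · rwa [leftScore_of_empty he]
    · exact hp (rightScore_le_leftScore hA) hA0

lemma rs_iff {p : ℝ → Prop} (hp : ∀ {x y : ℝ}, x ≤ y → p x → p y) {P : SGame} :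
    p P.rightScore ↔ ((P.rightOpts = [] → p P.score) ∧ ∀ D ∈ P.rightOpts, p D.leftScore) := by
  constructor
  · intro h
    refine ⟨fun he => by rwa [rightScore_of_empty he] at h,
      fun D hD => hp (rightScore_le_leftScore' hD) h⟩
  · rintro ⟨hs, hall⟩
    by_cases he : P.rightOpts = []
    · rw [rightScore_of_empty he]; exact hs he
    · rcases exists_rightScore he with ⟨D, hD, hE⟩
      rw [hE]; exact hall D hD

/-- Monotone deletion: fewer Left options and more Right options only hurt. -/
theorem tr_mono_gen {p : ℝ → Prop} (hp : ∀ {x y : ℝ}, x ≤ y → p x → p y)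
    {L L' R R' : List SGame} {s : ℝ}
    (hL : ∀ A ∈ L', A ∈ L) (hR : ∀ D ∈ R, D ∈ R')
    (hLe : L' = [] → L = []) (hRe : R = [] → R' = []) :
    ∀ X : SGame,
      (p ((mk L' R' s).sum X).leftScore → p ((mk L R s).sum X).leftScore) ∧
      (p ((mk L' R' s).sum X).rightScore → p ((mk L R s).sum X).rightScore)
  | X => by
    constructor
    · intro h
      rcases (ls_iff hp).1 h with ⟨hemp, hs⟩ | ⟨Q, hQ, hQ0⟩
      · rcases sum_leftOpts_nil.1 hemp with ⟨h1, h2⟩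
        refine (ls_iff hp).2 (Or.inl ⟨sum_leftOpts_nil.2 ⟨by simpa using hLe (by simpa using h1), h2⟩, ?_⟩)
        rwa [sum_score] at hs ⊢
      · rcases sum_leftOpts_cases hQ with ⟨A, hA, rfl⟩ | ⟨Y, hY, rfl⟩
        · exact (ls_iff hp).2 (Or.inr ⟨A.sum X,
            mem_sum_ll (by simpa using hL A (by simpa using hA)), hQ0⟩)
        · exact (ls_iff hp).2 (Or.inr ⟨(mk L R s).sum Y, mem_sum_lc hY,
            (tr_mono_gen hp hL hR hLe hRe Y).2 hQ0⟩)
    · intro h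
      rcases (rs_iff hp).1 h with ⟨hsc, hall⟩
      refine (rs_iff hp).2 ⟨?_, ?_⟩
      · intro hemp
        rcases sum_rightOpts_nil.1 hemp with ⟨h1, h2⟩
        have := hsc (sum_rightOpts_nil.2 ⟨by simpa using hRe (by simpa using h1), h2⟩)
        rwa [sum_score] at this ⊢
      · intro Q hQ
        rcases sum_rightOpts_cases hQ with ⟨D, hD, rfl⟩ | ⟨Y, hY, rfl⟩
        · exact hall (D.sum X) (mem_sum_rl (by simpa using hR D (by simpa using hD)))
        · exact (tr_mono_gen hp hL hR hLe hRe Y).1 (hall ((mk L' R' s).sum Y) (mem_sum_rc hY))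
termination_by X => sizeOf X
decreasing_by
  · exact sizeOf_lt_of_mem_left hY
  · exact sizeOf_lt_of_mem_right hY

lemma hp_nonneg : ∀ {x y : ℝ}, x ≤ y → 0 ≤ x → 0 ≤ y := fun h h' => le_trans h' h
lemma hp_pos : ∀ {x y : ℝ}, x ≤ y → 0 < x → 0 < y := fun h h' => lt_of_lt_of_le h' h

theorem tr_mono {L L' R R' : List SGame} {s : ℝ}
    (hL : ∀ A ∈ L', A ∈ L) (hR : ∀ D ∈ R, D ∈ R')
    (hLe : L' = [] → L = []) (hRe : R = [] → R' = []) (X : SGame) :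
    Tr (mk L' R' s) (mk L R s) X :=
  ⟨(tr_mono_gen @hp_nonneg hL hR hLe hRe X).1, (tr_mono_gen @hp_pos hL hR hLe hRe X).1,
   (tr_mono_gen @hp_nonneg hL hR hLe hRe X).2, (tr_mono_gen @hp_pos hL hR hLe hRe X).2⟩

lemma mem_cons_mid_cases {x B : SGame} {L1 L2 : List SGame} (h : x ∈ L1 ++ B :: L2) :
    x = B ∨ x ∈ L1 ++ L2 := by
  simp only [List.mem_append, List.mem_cons] at *; tauto
lemma mem_cons_mid_of_out {x B : SGame} {L1 L2 : List SGame} (h : x ∈ L1 ++ L2) :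
    x ∈ L1 ++ B :: L2 := by
  simp only [List.mem_append, List.mem_cons] at *; tauto
lemma mem_mid_cases {x : SGame} {L1 M L2 : List SGame} (h : x ∈ L1 ++ M ++ L2) :
    x ∈ M ∨ x ∈ L1 ++ L2 := by
  simp only [List.mem_append] at *; tauto
lemma mem_mid_of_mid {x : SGame} {L1 M L2 : List SGame} (h : x ∈ M) : x ∈ L1 ++ M ++ L2 := by
  simp only [List.mem_append]; tauto
lemma mem_mid_of_out {x : SGame} {L1 M L2 : List SGame} (h : x ∈ L1 ++ L2) :
    x ∈ L1 ++ M ++ L2 := by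
  simp only [List.mem_append] at *; tauto

lemma mem_sum_ll' {A : SGame} {L R : List SGame} {s : ℝ} {X : SGame} (h : A ∈ L) :
    A.sum X ∈ ((mk L R s).sum X).leftOpts := mem_sum_ll (by simpa using h)
lemma mem_sum_rl' {D : SGame} {L R : List SGame} {s : ℝ} {X : SGame} (h : D ∈ R) :
    D.sum X ∈ ((mk L R s).sum X).rightOpts := mem_sum_rl (by simpa using h)

lemma ne_nil_sum_left {L R : List SGame} {s : ℝ} {X : SGame} (h : L ≠ []) :
    ((mk L R s).sum X).leftOpts ≠ [] :=
  fun hc => h (by simpa using (sum_leftOpts_nil.1 hc).1)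
lemma ne_nil_sum_right {L R : List SGame} {s : ℝ} {X : SGame} (h : R ≠ []) :
    ((mk L R s).sum X).rightOpts ≠ [] :=
  fun hc => h (by simpa using (sum_rightOpts_nil.1 hc).1)

/-- Removing a dominated Left option. -/
theorem tr_dom_genL {p : ℝ → Prop} (hp : ∀ {x y : ℝ}, x ≤ y → p x → p y)
    {L1 L2 R : List SGame} {s : ℝ} {A B : SGame} (hA : A ∈ L1 ++ L2)
    (hAB : ∀ Y, p (B.sum Y).rightScore → p (A.sum Y).rightScore) :
    ∀ X : SGame,
      (p ((mk (L1 ++ B :: L2) R s).sum X).leftScore →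
        p ((mk (L1 ++ L2) R s).sum X).leftScore) ∧
      (p ((mk (L1 ++ B :: L2) R s).sum X).rightScore →
        p ((mk (L1 ++ L2) R s).sum X).rightScore)
  | X => by
    constructor
    · intro h
      rcases (ls_iff hp).1 h with ⟨hemp, _⟩ | ⟨Q, hQ, hQ0⟩
      · have := (sum_leftOpts_nil.1 hemp).1; simp at this
      · rcases sum_leftOpts_cases hQ with ⟨A'', hA'', rfl⟩ | ⟨Y, hY, rfl⟩
        · simp only [leftOpts_mk] at hA''
          rcases mem_cons_mid_cases hA'' with rfl | hmem
          · exact (ls_iff hp).2 (Or.inr ⟨A.sum X, mem_sum_ll' hA, hAB X hQ0⟩)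
          · exact (ls_iff hp).2 (Or.inr ⟨A''.sum X, mem_sum_ll' hmem, hQ0⟩)
        · exact (ls_iff hp).2 (Or.inr ⟨_, mem_sum_lc hY, (tr_dom_genL hp hA hAB Y).2 hQ0⟩)
    · intro h
      rcases (rs_iff hp).1 h with ⟨hsc, hall⟩
      refine (rs_iff hp).2 ⟨?_, ?_⟩
      · intro hemp
        rcases sum_rightOpts_nil.1 hemp with ⟨h1, h2⟩
        have := hsc (sum_rightOpts_nil.2 ⟨by simpa using h1, h2⟩)
        rw [sum_score] at this ⊢
        simpa using this
      · intro Q hQ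
        rcases sum_rightOpts_cases hQ with ⟨D, hD, rfl⟩ | ⟨Y, hY, rfl⟩
        · exact hall (D.sum X) (mem_sum_rl' (by simpa using hD))
        · exact (tr_dom_genL hp hA hAB Y).1 (hall _ (mem_sum_rc hY))
termination_by X => sizeOf X
decreasing_by
  · exact sizeOf_lt_of_mem_left hY
  · exact sizeOf_lt_of_mem_right hY

/-- Removing a dominated Right option (nontrivial direction). -/
theorem tr_dom_genR {p : ℝ → Prop} (hp : ∀ {x y : ℝ}, x ≤ y → p x → p y)
    {R1 R2 L : List SGame} {s : ℝ} {D E : SGame} (hD : D ∈ R1 ++ R2)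
    (hDE : ∀ Y, p (D.sum Y).leftScore → p (E.sum Y).leftScore) :
    ∀ X : SGame,
      (p ((mk L (R1 ++ R2) s).sum X).leftScore →
        p ((mk L (R1 ++ E :: R2) s).sum X).leftScore) ∧
      (p ((mk L (R1 ++ R2) s).sum X).rightScore →
        p ((mk L (R1 ++ E :: R2) s).sum X).rightScore)
  | X => by
    constructor
    · intro h
      rcases (ls_iff hp).1 h with ⟨hemp, hs⟩ | ⟨Q, hQ, hQ0⟩
      · rcases sum_leftOpts_nil.1 hemp with ⟨h1, h2⟩
        refine (ls_iff hp).2 (Or.inl ⟨sum_leftOpts_nil.2 ⟨by simpa using h1, h2⟩, ?_⟩)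
        rw [sum_score] at hs ⊢
        simpa using hs
      · rcases sum_leftOpts_cases hQ with ⟨A, hA, rfl⟩ | ⟨Y, hY, rfl⟩
        · exact (ls_iff hp).2 (Or.inr ⟨A.sum X, mem_sum_ll' (by simpa using hA), hQ0⟩)
        · exact (ls_iff hp).2 (Or.inr ⟨_, mem_sum_lc hY, (tr_dom_genR hp hD hDE Y).2 hQ0⟩)
    · intro h
      rcases (rs_iff hp).1 h with ⟨hsc, hall⟩
      refine (rs_iff hp).2 ⟨?_, ?_⟩
      · intro hemp
        have := (sum_rightOpts_nil.1 hemp).1; simp at this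
      · intro Q hQ
        rcases sum_rightOpts_cases hQ with ⟨D'', hD'', rfl⟩ | ⟨Y, hY, rfl⟩
        · simp only [rightOpts_mk] at hD''
          rcases mem_cons_mid_cases hD'' with rfl | hmem
          · exact hDE X (hall (D.sum X) (mem_sum_rl' hD))
          · exact hall (D''.sum X) (mem_sum_rl' hmem)
        · exact (tr_dom_genR hp hD hDE Y).1 (hall _ (mem_sum_rc hY))
termination_by X => sizeOf X
decreasing_by
  · exact sizeOf_lt_of_mem_left hY
  · exact sizeOf_lt_of_mem_right hY

/-- Bypassing a reversible Left option: original to reduced. -/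
theorem tr_rev_genL₁ {p : ℝ → Prop} (hp : ∀ {x y : ℝ}, x ≤ y → p x → p y)
    {L1 L2 R : List SGame} {s : ℝ} {A Ar : SGame} (hAr : Ar ∈ A.rightOpts)
    (hne : Ar.leftOpts ≠ [])
    (hArG : ∀ Y, p (Ar.sum Y).rightScore → p ((mk (L1 ++ A :: L2) R s).sum Y).rightScore) :
    ∀ X : SGame,
      (p ((mk (L1 ++ A :: L2) R s).sum X).leftScore →
        p ((mk (L1 ++ Ar.leftOpts ++ L2) R s).sum X).leftScore) ∧
      (p ((mk (L1 ++ A :: L2) R s).sum X).rightScore →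
        p ((mk (L1 ++ Ar.leftOpts ++ L2) R s).sum X).rightScore)
  | X => by
    constructor
    · intro h
      rcases (ls_iff hp).1 h with ⟨hemp, _⟩ | ⟨Q, hQ, hQ0⟩
      · have := (sum_leftOpts_nil.1 hemp).1; simp at this
      · rcases sum_leftOpts_cases hQ with ⟨A'', hA'', rfl⟩ | ⟨Y, hY, rfl⟩
        · simp only [leftOpts_mk] at hA''
          rcases mem_cons_mid_cases hA'' with rfl | hmem
          · -- the reversible option A itself
            have h1 : p (Ar.sum X).leftScore :=
              hp (rightScore_le_leftScore' (mem_sum_rl hAr)) hQ0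
            rcases (ls_iff hp).1 h1 with ⟨hemp', _⟩ | ⟨Q', hQ', hQ0'⟩
            · exact absurd (by simpa using (sum_leftOpts_nil.1 hemp').1) hne
            · rcases sum_leftOpts_cases hQ' with ⟨Al, hAl, rfl⟩ | ⟨Y, hY, rfl⟩
              · exact (ls_iff hp).2 (Or.inr ⟨Al.sum X, mem_sum_ll' (mem_mid_of_mid hAl), hQ0'⟩)
              · have h2 := hArG Y hQ0'
                have h3 := (tr_rev_genL₁ hp hAr hne hArG Y).2 h2
                exact (ls_iff hp).2 (Or.inr ⟨_, mem_sum_lc hY, h3⟩)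
          · exact (ls_iff hp).2 (Or.inr ⟨A''.sum X, mem_sum_ll' (mem_mid_of_out hmem), hQ0⟩)
        · exact (ls_iff hp).2 (Or.inr ⟨_, mem_sum_lc hY,
            (tr_rev_genL₁ hp hAr hne hArG Y).2 hQ0⟩)
    · intro h
      rcases (rs_iff hp).1 h with ⟨hsc, hall⟩
      refine (rs_iff hp).2 ⟨?_, ?_⟩
      · intro hemp
        rcases sum_rightOpts_nil.1 hemp with ⟨h1, h2⟩
        have := hsc (sum_rightOpts_nil.2 ⟨by simpa using h1, h2⟩)
        rw [sum_score] at this ⊢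
        simpa using this
      · intro Q hQ
        rcases sum_rightOpts_cases hQ with ⟨D, hD, rfl⟩ | ⟨Y, hY, rfl⟩
        · exact hall (D.sum X) (mem_sum_rl' (by simpa using hD))
        · exact (tr_rev_genL₁ hp hAr hne hArG Y).1 (hall _ (mem_sum_rc hY))
termination_by X => sizeOf X
decreasing_by
  · exact sizeOf_lt_of_mem_left hY
  · exact sizeOf_lt_of_mem_left hY
  · exact sizeOf_lt_of_mem_right hY

/-- Bypassing a reversible Left option: reduced to original. -/
theorem tr_rev_genL₂ {p : ℝ → Prop} (hp : ∀ {x y : ℝ}, x ≤ y → p x → p y)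
    {L1 L2 R : List SGame} {s : ℝ} {A Ar : SGame} (hne : Ar.leftOpts ≠ [])
    (hArG : ∀ Y, p (Ar.sum Y).leftScore → p ((mk (L1 ++ A :: L2) R s).sum Y).leftScore) :
    ∀ X : SGame,
      (p ((mk (L1 ++ Ar.leftOpts ++ L2) R s).sum X).leftScore →
        p ((mk (L1 ++ A :: L2) R s).sum X).leftScore) ∧
      (p ((mk (L1 ++ Ar.leftOpts ++ L2) R s).sum X).rightScore →
        p ((mk (L1 ++ A :: L2) R s).sum X).rightScore)
  | X => by
    constructor
    · intro h
      rcases (ls_iff hp).1 h with ⟨hemp, _⟩ | ⟨Q, hQ, hQ0⟩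
      · have h1 := (sum_leftOpts_nil.1 hemp).1
        simp only [leftOpts_mk, List.append_eq_nil_iff] at h1
        exact absurd h1.1.2 hne
      · rcases sum_leftOpts_cases hQ with ⟨A'', hA'', rfl⟩ | ⟨Y, hY, rfl⟩
        · simp only [leftOpts_mk] at hA''
          rcases mem_mid_cases hA'' with hmem | hmem
          · -- a left option of Ar : climb to Ar then use hArG
            have h1 : p (Ar.sum X).leftScore :=
              hp (rightScore_le_leftScore (mem_sum_ll hmem)) hQ0
            exact hArG X h1
          · exact (ls_iff hp).2 (Or.inr ⟨A''.sum X, mem_sum_ll' (mem_cons_mid_of_out hmem), hQ0⟩)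
        · exact (ls_iff hp).2 (Or.inr ⟨_, mem_sum_lc hY,
            (tr_rev_genL₂ hp hne hArG Y).2 hQ0⟩)
    · intro h
      rcases (rs_iff hp).1 h with ⟨hsc, hall⟩
      refine (rs_iff hp).2 ⟨?_, ?_⟩
      · intro hemp
        rcases sum_rightOpts_nil.1 hemp with ⟨h1, h2⟩
        have := hsc (sum_rightOpts_nil.2 ⟨by simpa using h1, h2⟩)
        rw [sum_score] at this ⊢
        simpa using this
      · intro Q hQ
        rcases sum_rightOpts_cases hQ with ⟨D, hD, rfl⟩ | ⟨Y, hY, rfl⟩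
        · exact hall (D.sum X) (mem_sum_rl' (by simpa using hD))
        · exact (tr_rev_genL₂ hp hne hArG Y).1 (hall _ (mem_sum_rc hY))
termination_by X => sizeOf X
decreasing_by
  · exact sizeOf_lt_of_mem_left hY
  · exact sizeOf_lt_of_mem_right hY

/-- Bypassing a reversible Right option: original to reduced. -/
theorem tr_rev_genR₁ {p : ℝ → Prop} (hp : ∀ {x y : ℝ}, x ≤ y → p x → p y)
    {R1 R2 L : List SGame} {s : ℝ} {D Dl : SGame} (hDl : Dl ∈ D.leftOpts)
    (hne : Dl.rightOpts ≠ [])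
    (hGDl : ∀ Y, p ((mk L (R1 ++ D :: R2) s).sum Y).rightScore → p (Dl.sum Y).rightScore) :
    ∀ X : SGame,
      (p ((mk L (R1 ++ D :: R2) s).sum X).leftScore →
        p ((mk L (R1 ++ Dl.rightOpts ++ R2) s).sum X).leftScore) ∧
      (p ((mk L (R1 ++ D :: R2) s).sum X).rightScore →
        p ((mk L (R1 ++ Dl.rightOpts ++ R2) s).sum X).rightScore)
  | X => by
    constructor
    · intro h
      rcases (ls_iff hp).1 h with ⟨hemp, hs⟩ | ⟨Q, hQ, hQ0⟩
      · rcases sum_leftOpts_nil.1 hemp with ⟨h1, h2⟩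
        refine (ls_iff hp).2 (Or.inl ⟨sum_leftOpts_nil.2 ⟨by simpa using h1, h2⟩, ?_⟩)
        rw [sum_score] at hs ⊢
        simpa using hs
      · rcases sum_leftOpts_cases hQ with ⟨A, hA, rfl⟩ | ⟨Y, hY, rfl⟩
        · exact (ls_iff hp).2 (Or.inr ⟨A.sum X, mem_sum_ll' (by simpa using hA), hQ0⟩)
        · exact (ls_iff hp).2 (Or.inr ⟨_, mem_sum_lc hY,
            (tr_rev_genR₁ hp hDl hne hGDl Y).2 hQ0⟩)
    · intro h
      rcases (rs_iff hp).1 h with ⟨hsc, hall⟩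
      have hDlRS : p (Dl.sum X).rightScore := hGDl X h
      refine (rs_iff hp).2 ⟨?_, ?_⟩
      · intro hemp
        have h1 := (sum_rightOpts_nil.1 hemp).1
        simp only [rightOpts_mk, List.append_eq_nil_iff] at h1
        exact absurd h1.1.2 hne
      · intro Q hQ
        rcases sum_rightOpts_cases hQ with ⟨D'', hD'', rfl⟩ | ⟨Y, hY, rfl⟩
        · simp only [rightOpts_mk] at hD''
          rcases mem_mid_cases hD'' with hmem | hmem
          · exact (rs_iff hp).1 hDlRS |>.2 (D''.sum X) (mem_sum_rl hmem)
          · exact hall (D''.sum X) (mem_sum_rl' (mem_cons_mid_of_out hmem))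
        · exact (tr_rev_genR₁ hp hDl hne hGDl Y).1 (hall _ (mem_sum_rc hY))
termination_by X => sizeOf X
decreasing_by
  · exact sizeOf_lt_of_mem_left hY
  · exact sizeOf_lt_of_mem_right hY

/-- Bypassing a reversible Right option: reduced to original. -/
theorem tr_rev_genR₂ {p : ℝ → Prop} (hp : ∀ {x y : ℝ}, x ≤ y → p x → p y)
    {R1 R2 L : List SGame} {s : ℝ} {D Dl : SGame} (hDl : Dl ∈ D.leftOpts)
    (hne : Dl.rightOpts ≠ [])
    (hGDl : ∀ Y, p ((mk L (R1 ++ D :: R2) s).sum Y).leftScore → p (Dl.sum Y).leftScore) :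
    ∀ X : SGame,
      (p ((mk L (R1 ++ Dl.rightOpts ++ R2) s).sum X).leftScore →
        p ((mk L (R1 ++ D :: R2) s).sum X).leftScore) ∧
      (p ((mk L (R1 ++ Dl.rightOpts ++ R2) s).sum X).rightScore →
        p ((mk L (R1 ++ D :: R2) s).sum X).rightScore)
  | X => by
    constructor
    · intro h
      rcases (ls_iff hp).1 h with ⟨hemp, hs⟩ | ⟨Q, hQ, hQ0⟩
      · rcases sum_leftOpts_nil.1 hemp with ⟨h1, h2⟩
        refine (ls_iff hp).2 (Or.inl ⟨sum_leftOpts_nil.2 ⟨by simpa using h1, h2⟩, ?_⟩)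
        rw [sum_score] at hs ⊢
        simpa using hs
      · rcases sum_leftOpts_cases hQ with ⟨A, hA, rfl⟩ | ⟨Y, hY, rfl⟩
        · exact (ls_iff hp).2 (Or.inr ⟨A.sum X, mem_sum_ll' (by simpa using hA), hQ0⟩)
        · exact (ls_iff hp).2 (Or.inr ⟨_, mem_sum_lc hY,
            (tr_rev_genR₂ hp hDl hne hGDl Y).2 hQ0⟩)
    · intro h
      rcases (rs_iff hp).1 h with ⟨hsc, hall⟩
      refine (rs_iff hp).2 ⟨?_, ?_⟩
      · intro hemp
        have h1 := (sum_rightOpts_nil.1 hemp).1; simp at h1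
      · intro Q hQ
        rcases sum_rightOpts_cases hQ with ⟨D'', hD'', rfl⟩ | ⟨Y, hY, rfl⟩
        · simp only [rightOpts_mk] at hD''
          rcases mem_cons_mid_cases hD'' with rfl | hmem
          · -- the bypassed option D itself : exhibit Left's reply Dl
            refine (ls_iff hp).2 (Or.inr ⟨Dl.sum X, mem_sum_ll hDl, ?_⟩)
            refine (rs_iff hp).2 ⟨?_, ?_⟩
            · intro hemp'
              have h1 := (sum_rightOpts_nil.1 hemp').1
              exact absurd h1 hne
            · intro Q' hQ'
              rcases sum_rightOpts_cases hQ' with ⟨Dr, hDr, rfl⟩ | ⟨Y, hY, rfl⟩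
              · exact hall (Dr.sum X) (mem_sum_rl' (mem_mid_of_mid hDr))
              · have h2 := (tr_rev_genR₂ hp hDl hne hGDl Y).1
                  (hall _ (mem_sum_rc hY))
                exact hGDl Y h2
          · exact hall (D''.sum X) (mem_sum_rl' (mem_mid_of_out hmem))
        · exact (tr_rev_genR₂ hp hDl hne hGDl Y).1 (hall _ (mem_sum_rc hY))
termination_by X => sizeOf X
decreasing_by
  · exact sizeOf_lt_of_mem_left hY
  · exact sizeOf_lt_of_mem_right hY
  · exact sizeOf_lt_of_mem_right hY

/-- Congruence: replacing a Left option by a similar one. -/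
theorem tr_cong_genL {p : ℝ → Prop} (hp : ∀ {x y : ℝ}, x ≤ y → p x → p y)
    {L1 L2 R : List SGame} {s : ℝ} {g g' : SGame}
    (hgR : ∀ Y, p (g.sum Y).rightScore → p (g'.sum Y).rightScore) :
    ∀ X : SGame,
      (p ((mk (L1 ++ g :: L2) R s).sum X).leftScore →
        p ((mk (L1 ++ g' :: L2) R s).sum X).leftScore) ∧
      (p ((mk (L1 ++ g :: L2) R s).sum X).rightScore →
        p ((mk (L1 ++ g' :: L2) R s).sum X).rightScore)
  | X => by
    constructor
    · intro h
      rcases (ls_iff hp).1 h with ⟨hemp, _⟩ | ⟨Q, hQ, hQ0⟩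
      · have := (sum_leftOpts_nil.1 hemp).1; simp at this
      · rcases sum_leftOpts_cases hQ with ⟨A'', hA'', rfl⟩ | ⟨Y, hY, rfl⟩
        · simp only [leftOpts_mk] at hA''
          rcases mem_cons_mid_cases hA'' with rfl | hmem
          · exact (ls_iff hp).2 (Or.inr ⟨g'.sum X,
              mem_sum_ll' (by simp), hgR X hQ0⟩)
          · exact (ls_iff hp).2 (Or.inr ⟨A''.sum X,
              mem_sum_ll' (mem_cons_mid_of_out hmem), hQ0⟩)
        · exact (ls_iff hp).2 (Or.inr ⟨_, mem_sum_lc hY, (tr_cong_genL hp hgR Y).2 hQ0⟩)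
    · intro h
      rcases (rs_iff hp).1 h with ⟨hsc, hall⟩
      refine (rs_iff hp).2 ⟨?_, ?_⟩
      · intro hemp
        rcases sum_rightOpts_nil.1 hemp with ⟨h1, h2⟩
        have := hsc (sum_rightOpts_nil.2 ⟨by simpa using h1, h2⟩)
        rw [sum_score] at this ⊢
        simpa using this
      · intro Q hQ
        rcases sum_rightOpts_cases hQ with ⟨D, hD, rfl⟩ | ⟨Y, hY, rfl⟩
        · exact hall (D.sum X) (mem_sum_rl' (by simpa using hD))
        · exact (tr_cong_genL hp hgR Y).1 (hall _ (mem_sum_rc hY))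
termination_by X => sizeOf X
decreasing_by
  · exact sizeOf_lt_of_mem_left hY
  · exact sizeOf_lt_of_mem_right hY

/-- Congruence: replacing a Right option by a similar one. -/
theorem tr_cong_genR {p : ℝ → Prop} (hp : ∀ {x y : ℝ}, x ≤ y → p x → p y)
    {R1 R2 L : List SGame} {s : ℝ} {g g' : SGame}
    (hgL : ∀ Y, p (g.sum Y).leftScore → p (g'.sum Y).leftScore) :
    ∀ X : SGame,
      (p ((mk L (R1 ++ g :: R2) s).sum X).leftScore →
        p ((mk L (R1 ++ g' :: R2) s).sum X).leftScore) ∧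
      (p ((mk L (R1 ++ g :: R2) s).sum X).rightScore →
        p ((mk L (R1 ++ g' :: R2) s).sum X).rightScore)
  | X => by
    constructor
    · intro h
      rcases (ls_iff hp).1 h with ⟨hemp, hs⟩ | ⟨Q, hQ, hQ0⟩
      · rcases sum_leftOpts_nil.1 hemp with ⟨h1, h2⟩
        refine (ls_iff hp).2 (Or.inl ⟨sum_leftOpts_nil.2 ⟨by simpa using h1, h2⟩, ?_⟩)
        rw [sum_score] at hs ⊢
        simpa using hs
      · rcases sum_leftOpts_cases hQ with ⟨A, hA, rfl⟩ | ⟨Y, hY, rfl⟩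
        · exact (ls_iff hp).2 (Or.inr ⟨A.sum X, mem_sum_ll' (by simpa using hA), hQ0⟩)
        · exact (ls_iff hp).2 (Or.inr ⟨_, mem_sum_lc hY, (tr_cong_genR hp hgL Y).2 hQ0⟩)
    · intro h
      rcases (rs_iff hp).1 h with ⟨hsc, hall⟩
      refine (rs_iff hp).2 ⟨?_, ?_⟩
      · intro hemp
        have := (sum_rightOpts_nil.1 hemp).1; simp at this
      · intro Q hQ
        rcases sum_rightOpts_cases hQ with ⟨D'', hD'', rfl⟩ | ⟨Y, hY, rfl⟩
        · simp only [rightOpts_mk] at hD''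
          rcases mem_cons_mid_cases hD'' with rfl | hmem
          · exact hgL X (hall (g.sum X) (mem_sum_rl' (by simp)))
          · exact hall (D''.sum X) (mem_sum_rl' (mem_cons_mid_of_out hmem))
        · exact (tr_cong_genR hp hgL Y).1 (hall _ (mem_sum_rc hY))
termination_by X => sizeOf X
decreasing_by
  · exact sizeOf_lt_of_mem_left hY
  · exact sizeOf_lt_of_mem_right hY

lemma le_foldr_max {x : ℝ} {l : List ℝ} (h : x ∈ l) (b : ℝ) : x ≤ l.foldr max b := by
  induction l with
  | nil => simp at h
  | cons a t ih =>
    rcases List.mem_cons.1 h with rfl | h'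
    · exact le_max_left _ _
    · exact le_trans (ih h') (le_max_right _ _)

/-- In any position `mk L R s + (mk [] [Z] t)` with `L ≠ []`, if `Z` is a huge penalty
then the left score is negative. -/
lemma ls_neg_of_penalty {L R : List SGame} {s t : ℝ}
    (hL : L ≠ []) :
    ((mk L R s).sum (mk [] [mk [] [] (-(1 + (L.map leftScore).foldr max 0))] t)).leftScore < 0 := by
  set M : ℝ := 1 + (L.map leftScore).foldr max 0 with hM
  rw [ls_neg_iff]
  constructor
  · intro hemp; exact absurd hemp (ne_nil_sum_left hL)
  · intro Q hQ
    rcases sum_leftOpts_cases hQ with ⟨A, hA, rfl⟩ | ⟨Y, hY, rfl⟩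
    · have h1 : (A.sum (mk [] [mk [] [] (-M)] t)).rightScore ≤ (A.sum (mk [] [] (-M))).leftScore :=
        rightScore_le_leftScore' (mem_sum_rc (by simp))
      rw [(sum_single (-M) A).1] at h1
      have h2 : A.leftScore ≤ (L.map leftScore).foldr max 0 :=
        le_foldr_max (List.mem_map_of_mem (by simpa using hA)) 0
      rw [hM] at h1; linarith
    · simp at hY

/-- Mirror: huge bonus available to Left makes right score positive. -/
lemma rs_pos_of_bonus {L R : List SGame} {s t : ℝ}
    (hR : R ≠ []) :
    0 < ((mk L R s).sum (mk [mk [] [] (1 + (R.map (fun D => -D.rightScore)).foldr max 0)] [] t)).rightScore := by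
  set M : ℝ := 1 + (R.map (fun D => -D.rightScore)).foldr max 0 with hM
  rw [rs_pos_iff]
  constructor
  · intro hemp; exact absurd hemp (ne_nil_sum_right hR)
  · intro Q hQ
    rcases sum_rightOpts_cases hQ with ⟨D, hD, rfl⟩ | ⟨Y, hY, rfl⟩
    · have h1 : (D.sum (mk [] [] M)).rightScore ≤ (D.sum (mk [mk [] [] M] [] t)).leftScore :=
        rightScore_le_leftScore (mem_sum_lc (by simp))
      rw [(sum_single M D).2] at h1
      have h2 : -D.rightScore ≤ (R.map (fun D => -D.rightScore)).foldr max 0 :=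
        le_foldr_max (List.mem_map_of_mem (f := fun D : SGame => -D.rightScore) (by simpa using hD)) 0
      rw [hM] at h1; linarith
    · simp at hY

/-- A reversing Right response in a Left option must itself have Left options. -/
lemma ar_nonempty {L R : List SGame} {s : ℝ} {Ar : SGame}
    (hL : L ≠ []) (h : Le Ar (mk L R s)) : Ar.leftOpts ≠ [] := by
  intro he
  set M : ℝ := 1 + (L.map leftScore).foldr max 0 with hM
  set X : SGame := mk [] [mk [] [] (-M)] (-Ar.score) with hX
  have h1 : (Ar.sum X).leftScore = 0 := by
    rw [leftScore_of_empty (sum_leftOpts_nil.2 ⟨he, by simp [hX]⟩), sum_score]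
    simp [hX]
  have h2 := (le_iff_tr.1 h X).1 (by rw [h1])
  have h3 : ((mk L R s).sum X).leftScore < 0 := ls_neg_of_penalty hL
  linarith

/-- A reversing Left response in a Right option must itself have Right options. -/
lemma dl_nonempty {L R : List SGame} {s : ℝ} {Dl : SGame}
    (hR : R ≠ []) (h : Ge Dl (mk L R s)) : Dl.rightOpts ≠ [] := by
  intro he
  set M : ℝ := 1 + (R.map (fun D => -D.rightScore)).foldr max 0 with hM
  set X : SGame := mk [mk [] [] M] [] (-Dl.score) with hX
  have h1 : (Dl.sum X).rightScore = 0 := by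
    rw [rightScore_of_empty (sum_rightOpts_nil.2 ⟨he, by simp [hX]⟩), sum_score]
    simp [hX]
  have h2 := (h X).2.2.2 (rs_pos_of_bonus hR)
  rw [h1] at h2
  exact lt_irrefl 0 h2

lemma sim_left_empty {L R L' R' : List SGame} {s s' : ℝ}
    (h : Sim (mk L R s) (mk L' R' s')) (he : L' = []) : L = [] := by
  by_contra hL
  set M : ℝ := 1 + (L.map leftScore).foldr max 0 with hM
  set X : SGame := mk [] [mk [] [] (-M)] (-s') with hX
  have h1 : ((mk L' R' s').sum X).leftScore = 0 := by
    rw [leftScore_of_empty (sum_leftOpts_nil.2 ⟨by simp [he], by simp [hX]⟩), sum_score]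
    simp [hX]
  have h2 := ((h X).2).1 (by rw [h1])
  have h3 : ((mk L R s).sum X).leftScore < 0 := ls_neg_of_penalty hL
  linarith

lemma sim_right_empty {L R L' R' : List SGame} {s s' : ℝ}
    (h : Sim (mk L R s) (mk L' R' s')) (he : R' = []) : R = [] := by
  by_contra hR
  set M : ℝ := 1 + (R.map (fun D => -D.rightScore)).foldr max 0 with hM
  set X : SGame := mk [mk [] [] M] [] (-s') with hX
  have h1 : ((mk L' R' s').sum X).rightScore = 0 := by
    rw [rightScore_of_empty (sum_rightOpts_nil.2 ⟨by simp [he], by simp [hX]⟩), sum_score]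
    simp [hX]
  have h2 := ((h X).1).2.2.2 (rs_pos_of_bonus hR)
  rw [h1] at h2
  exact lt_irrefl 0 h2

lemma sim_score {L R L' R' : List SGame} {s s' : ℝ}
    (h : Sim (mk L R s) (mk L' R' s')) (hc : L = [] ∨ R = []) : s = s' := by
  have key : ∀ t : ℝ, (0 ≤ s + t ↔ 0 ≤ s' + t) := by
    intro t
    set X : SGame := mk [] [] t with hX
    rcases hc with hc | hc
    · have hc' : L' = [] := sim_left_empty (sim_symm h) hc
      have e1 : ((mk L R s).sum X).leftScore = s + t := by
        rw [leftScore_of_empty (sum_leftOpts_nil.2 ⟨by simp [hc], by simp [hX]⟩), sum_score]; simp [hX]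
      have e2 : ((mk L' R' s').sum X).leftScore = s' + t := by
        rw [leftScore_of_empty (sum_leftOpts_nil.2 ⟨by simp [hc'], by simp [hX]⟩), sum_score]; simp [hX]
      constructor
      · intro ht; have := (h X).1.1 (by rw [e1]; exact ht); rwa [e2] at this
      · intro ht; have := (h X).2.1 (by rw [e2]; exact ht); rwa [e1] at this
    · have hc' : R' = [] := sim_right_empty (sim_symm h) hc
      have e1 : ((mk L R s).sum X).rightScore = s + t := by
        rw [rightScore_of_empty (sum_rightOpts_nil.2 ⟨by simp [hc], by simp [hX]⟩), sum_score]; simp [hX]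
      have e2 : ((mk L' R' s').sum X).rightScore = s' + t := by
        rw [rightScore_of_empty (sum_rightOpts_nil.2 ⟨by simp [hc'], by simp [hX]⟩), sum_score]; simp [hX]
      constructor
      · intro ht; have := (h X).1.2.2.1 (by rw [e1]; exact ht); rwa [e2] at this
      · intro ht; have := (h X).2.2.2.1 (by rw [e2]; exact ht); rwa [e1] at this
  have h1 := (key (-s)).1 (by linarith)
  have h2 := (key (-s')).2 (by linarith)
  linarith

/-- Each reduction step preserves game equality. -/
theorem step_sim {G G' : SGame} (h : Step G G') : Sim G G' := by
  induction h with
  | @domL L1 L2 R s B A hA hGe =>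
    intro X
    constructor
    · exact ⟨(tr_dom_genL @hp_nonneg hA (fun Y => (hGe Y).2.1) X).1,
             (tr_dom_genL @hp_pos hA (fun Y => (hGe Y).2.2.2) X).1,
             (tr_dom_genL @hp_nonneg hA (fun Y => (hGe Y).2.1) X).2,
             (tr_dom_genL @hp_pos hA (fun Y => (hGe Y).2.2.2) X).2⟩
    · exact tr_mono (fun A' hA' => mem_cons_mid_of_out hA') (fun D hD => hD)
        (fun hc => absurd (hc ▸ hA) List.not_mem_nil) (fun hc => hc) X
  | @domR R1 R2 L s E D hD hLe =>
    intro X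
    constructor
    · exact tr_mono (fun A hA => hA) (fun D'' hD'' => mem_cons_mid_of_out hD'')
        (fun hc => hc) (fun hc => absurd (hc ▸ hD) List.not_mem_nil) X
    · exact ⟨(tr_dom_genR @hp_nonneg hD (fun Y => (le_iff_tr.1 hLe Y).1) X).1,
             (tr_dom_genR @hp_pos hD (fun Y => (le_iff_tr.1 hLe Y).2.1) X).1,
             (tr_dom_genR @hp_nonneg hD (fun Y => (le_iff_tr.1 hLe Y).1) X).2,
             (tr_dom_genR @hp_pos hD (fun Y => (le_iff_tr.1 hLe Y).2.1) X).2⟩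
  | @revL L1 L2 R s A Ar hAr hLe =>
    have hne : Ar.leftOpts ≠ [] := ar_nonempty (by simp) hLe
    intro X
    constructor
    · exact ⟨(tr_rev_genL₁ @hp_nonneg hAr hne (fun Y => (le_iff_tr.1 hLe Y).2.2.1) X).1,
             (tr_rev_genL₁ @hp_pos hAr hne (fun Y => (le_iff_tr.1 hLe Y).2.2.2) X).1,
             (tr_rev_genL₁ @hp_nonneg hAr hne (fun Y => (le_iff_tr.1 hLe Y).2.2.1) X).2,
             (tr_rev_genL₁ @hp_pos hAr hne (fun Y => (le_iff_tr.1 hLe Y).2.2.2) X).2⟩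
    · exact ⟨(tr_rev_genL₂ @hp_nonneg hne (fun Y => (le_iff_tr.1 hLe Y).1) X).1,
             (tr_rev_genL₂ @hp_pos hne (fun Y => (le_iff_tr.1 hLe Y).2.1) X).1,
             (tr_rev_genL₂ @hp_nonneg hne (fun Y => (le_iff_tr.1 hLe Y).1) X).2,
             (tr_rev_genL₂ @hp_pos hne (fun Y => (le_iff_tr.1 hLe Y).2.1) X).2⟩
  | @revR R1 R2 L s D Dl hDl hGe =>
    have hne : Dl.rightOpts ≠ [] := dl_nonempty (by simp) hGe
    have hTr := ge_iff_tr.1 hGe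
    intro X
    constructor
    · exact ⟨(tr_rev_genR₁ @hp_nonneg hDl hne (fun Y => (hTr Y).2.2.1) X).1,
             (tr_rev_genR₁ @hp_pos hDl hne (fun Y => (hTr Y).2.2.2) X).1,
             (tr_rev_genR₁ @hp_nonneg hDl hne (fun Y => (hTr Y).2.2.1) X).2,
             (tr_rev_genR₁ @hp_pos hDl hne (fun Y => (hTr Y).2.2.2) X).2⟩
    · exact ⟨(tr_rev_genR₂ @hp_nonneg hDl hne (fun Y => (hTr Y).1) X).1,
             (tr_rev_genR₂ @hp_pos hDl hne (fun Y => (hTr Y).2.1) X).1,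
             (tr_rev_genR₂ @hp_nonneg hDl hne (fun Y => (hTr Y).1) X).2,
             (tr_rev_genR₂ @hp_pos hDl hne (fun Y => (hTr Y).2.1) X).2⟩
  | @congL g g' L1 L2 R s hstep ih =>
    intro X
    constructor
    · exact ⟨(tr_cong_genL @hp_nonneg (fun Y => ((ih Y).1).2.2.1) X).1,
             (tr_cong_genL @hp_pos (fun Y => ((ih Y).1).2.2.2) X).1,
             (tr_cong_genL @hp_nonneg (fun Y => ((ih Y).1).2.2.1) X).2,
             (tr_cong_genL @hp_pos (fun Y => ((ih Y).1).2.2.2) X).2⟩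
    · exact ⟨(tr_cong_genL @hp_nonneg (fun Y => ((ih Y).2).2.2.1) X).1,
             (tr_cong_genL @hp_pos (fun Y => ((ih Y).2).2.2.2) X).1,
             (tr_cong_genL @hp_nonneg (fun Y => ((ih Y).2).2.2.1) X).2,
             (tr_cong_genL @hp_pos (fun Y => ((ih Y).2).2.2.2) X).2⟩
  | @congR g g' L R1 R2 s hstep ih =>
    intro X
    constructor
    · exact ⟨(tr_cong_genR @hp_nonneg (fun Y => ((ih Y).1).1) X).1,
             (tr_cong_genR @hp_pos (fun Y => ((ih Y).1).2.1) X).1,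
             (tr_cong_genR @hp_nonneg (fun Y => ((ih Y).1).1) X).2,
             (tr_cong_genR @hp_pos (fun Y => ((ih Y).1).2.1) X).2⟩
    · exact ⟨(tr_cong_genR @hp_nonneg (fun Y => ((ih Y).2).1) X).1,
             (tr_cong_genR @hp_pos (fun Y => ((ih Y).2).2.1) X).1,
             (tr_cong_genR @hp_nonneg (fun Y => ((ih Y).2).1) X).2,
             (tr_cong_genR @hp_pos (fun Y => ((ih Y).2).2.1) X).2⟩

theorem rtg_sim {G H : SGame} (h : Relation.ReflTransGen Step G H) : Sim G H := by
  induction h with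
  | refl => exact sim_refl _
  | tail h1 h2 ih => exact sim_trans ih (step_sim h2)

/-- Turn a Right-to-move witness into a Left-to-move witness. -/
lemma conv_to_L {p q : ℝ → Prop} (hp : ∀ {x y : ℝ}, x ≤ y → p x → p y)
    (hq0 : ∀ x : ℝ, x < 0 → q x) {P Q X : SGame}
    (hP : p (P.sum X).rightScore) (hQ : q (Q.sum X).rightScore) :
    ∃ X', p (P.sum X').leftScore ∧ q (Q.sum X').leftScore := by
  set M : ℝ := 1 + (Q.leftOpts.map leftScore).foldr max 0 with hM
  refine ⟨mk [X] [mk [] [] (-M)] 0, ?_, ?_⟩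
  · exact (ls_iff hp).2 (Or.inr ⟨P.sum X, mem_sum_lc (by simp), hP⟩)
  · have hne : (Q.sum (mk [X] [mk [] [] (-M)] 0)).leftOpts ≠ [] :=
      fun hc => absurd (sum_leftOpts_nil.1 hc).2 (by simp)
    rcases exists_leftScore hne with ⟨W, hW, hE⟩
    rw [hE]
    rcases sum_leftOpts_cases hW with ⟨Ql, hQl, rfl⟩ | ⟨Y, hY, rfl⟩
    · apply hq0
      have h1 : (Ql.sum (mk [X] [mk [] [] (-M)] 0)).rightScore ≤ (Ql.sum (mk [] [] (-M))).leftScore :=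
        rightScore_le_leftScore' (mem_sum_rc (by simp))
      rw [(sum_single (-M) Ql).1] at h1
      have h2 : Ql.leftScore ≤ (Q.leftOpts.map leftScore).foldr max 0 :=
        le_foldr_max (List.mem_map_of_mem hQl) 0
      rw [hM] at h1; linarith
    · have : Y = X := by simpa using hY
      subst this; exact hQ

/-- Turn a Left-to-move witness into a Right-to-move witness. -/
lemma conv_to_R {p q : ℝ → Prop} (hp : ∀ {x y : ℝ}, x ≤ y → p x → p y)
    (hp0 : ∀ x : ℝ, 0 < x → p x) (hqd : ∀ {x y : ℝ}, x ≤ y → q y → q x) {P Q X : SGame}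
    (hP : p (P.sum X).leftScore) (hQ : q (Q.sum X).leftScore) :
    ∃ X', p (P.sum X').rightScore ∧ q (Q.sum X').rightScore := by
  set M : ℝ := 1 + (P.rightOpts.map (fun D => -D.rightScore)).foldr max 0 with hM
  refine ⟨mk [mk [] [] M] [X] 0, ?_, ?_⟩
  · refine (rs_iff hp).2 ⟨?_, ?_⟩
    · intro hc; exact absurd (sum_rightOpts_nil.1 hc).2 (by simp)
    · intro W hW
      rcases sum_rightOpts_cases hW with ⟨Pr, hPr, rfl⟩ | ⟨Y, hY, rfl⟩
      · apply hp0
        have h1 : (Pr.sum (mk [] [] M)).rightScore ≤ (Pr.sum (mk [mk [] [] M] [X] 0)).leftScore :=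
          rightScore_le_leftScore (mem_sum_lc (by simp))
        rw [(sum_single M Pr).2] at h1
        have h2 : -Pr.rightScore ≤ (P.rightOpts.map (fun D => -D.rightScore)).foldr max 0 :=
          le_foldr_max (List.mem_map_of_mem (f := fun D : SGame => -D.rightScore) hPr) 0
        rw [hM] at h1; linarith
      · have : Y = X := by simpa using hY
        subst this; exact hP
  · exact hqd (rightScore_le_leftScore' (mem_sum_rc (by simp))) hQ

/-- Witness normalization for a failed Left-option domination. -/
lemma notGe_witL {A' A : SGame} (h : ¬ Ge A' A) :
    ∃ X, 0 ≤ (A.sum X).leftScore ∧ (A'.sum X).leftScore < 0 := by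
  unfold Ge at h
  obtain ⟨X, hX⟩ := not_forall.1 h
  rcases not_and_or.1 hX with h1 | h234
  · push_neg at h1; exact ⟨X, h1.1, h1.2⟩
  rcases not_and_or.1 h234 with h2 | h34
  · push_neg at h2
    exact conv_to_L hp_nonneg (fun x hx => hx) h2.1 h2.2
  rcases not_and_or.1 h34 with h3 | h4
  · push_neg at h3
    refine ⟨X.sum (mk [] [] (-(A.sum X).leftScore)), ?_, ?_⟩
    · rw [(sum_shift _ A X).1]; linarith [h3.1]
    · rw [(sum_shift _ A' X).1]; linarith [h3.1, h3.2]
  · push_neg at h4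
    have h5 : 0 ≤ (A.sum (X.sum (mk [] [] (-(A.sum X).rightScore)))).rightScore := by
      rw [(sum_shift _ A X).2]; linarith [h4.1]
    have h6 : (A'.sum (X.sum (mk [] [] (-(A.sum X).rightScore)))).rightScore < 0 := by
      rw [(sum_shift _ A' X).2]; linarith [h4.1, h4.2]
    exact conv_to_L hp_nonneg (fun x hx => hx) h5 h6

/-- Witness normalization for a failed reversal through a Left option. -/
lemma notLe_witR {Ar H : SGame} (h : ¬ Le Ar H) :
    ∃ Y, 0 ≤ (Ar.sum Y).rightScore ∧ (H.sum Y).rightScore < 0 := by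
  unfold Le at h
  obtain ⟨X, hX⟩ := not_forall.1 h
  rcases not_and_or.1 hX with h1 | h234
  · push_neg at h1
    have h5 : 0 ≤ (Ar.sum (X.sum (mk [] [] (-(Ar.sum X).leftScore)))).leftScore := by
      rw [(sum_shift _ Ar X).1]; linarith [h1.2]
    have h6 : (H.sum (X.sum (mk [] [] (-(Ar.sum X).leftScore)))).leftScore < 0 := by
      rw [(sum_shift _ H X).1]; linarith [h1.1, h1.2]
    exact conv_to_R hp_nonneg (fun x hx => le_of_lt hx) (fun hxy hy => lt_of_le_of_lt hxy hy) h5 h6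
  rcases not_and_or.1 h234 with h2 | h34
  · push_neg at h2
    refine ⟨X.sum (mk [] [] (-(Ar.sum X).rightScore)), ?_, ?_⟩
    · rw [(sum_shift _ Ar X).2]; linarith [h2.2]
    · rw [(sum_shift _ H X).2]; linarith [h2.1, h2.2]
  rcases not_and_or.1 h34 with h3 | h4
  · push_neg at h3
    exact conv_to_R hp_nonneg (fun x hx => le_of_lt hx) (fun hxy hy => lt_of_le_of_lt hxy hy) h3.2 h3.1
  · push_neg at h4; exact ⟨X, h4.2, h4.1⟩

/-- Witness normalization for a failed Right-option domination. -/
lemma notLe_witR' {D' D : SGame} (h : ¬ Le D' D) :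
    ∃ X, (D.sum X).rightScore ≤ 0 ∧ 0 < (D'.sum X).rightScore := by
  unfold Le at h
  obtain ⟨X, hX⟩ := not_forall.1 h
  rcases not_and_or.1 hX with h1 | h234
  · push_neg at h1
    obtain ⟨X', hp', hq'⟩ := conv_to_R hp_pos (fun x hx => hx)
      (fun hxy hy => le_trans hxy hy) h1.2 h1.1
    exact ⟨X', hq', hp'⟩
  rcases not_and_or.1 h234 with h2 | h34
  · push_neg at h2; exact ⟨X, h2.1, h2.2⟩
  rcases not_and_or.1 h34 with h3 | h4
  · push_neg at h3
    have h5 : (D.sum (X.sum (mk [] [] (-(D.sum X).leftScore)))).leftScore ≤ 0 := by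
      rw [(sum_shift _ D X).1]; linarith [h3.1]
    have h6 : 0 < (D'.sum (X.sum (mk [] [] (-(D.sum X).leftScore)))).leftScore := by
      rw [(sum_shift _ D' X).1]; linarith [h3.1, h3.2]
    obtain ⟨X', hp', hq'⟩ := conv_to_R hp_pos (fun x hx => hx)
      (fun hxy hy => le_trans hxy hy) h6 h5
    exact ⟨X', hq', hp'⟩
  · push_neg at h4
    refine ⟨X.sum (mk [] [] (-(D.sum X).rightScore)), ?_, ?_⟩
    · rw [(sum_shift _ D X).2]; linarith [h4.1]
    · rw [(sum_shift _ D' X).2]; linarith [h4.1, h4.2]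

/-- Witness normalization for a failed reversal through a Right option. -/
lemma notGe_witL' {Dl H : SGame} (h : ¬ Ge Dl H) :
    ∃ Y, (Dl.sum Y).leftScore ≤ 0 ∧ 0 < (H.sum Y).leftScore := by
  unfold Ge at h
  obtain ⟨X, hX⟩ := not_forall.1 h
  rcases not_and_or.1 hX with h1 | h234
  · push_neg at h1
    refine ⟨X.sum (mk [] [] (-(Dl.sum X).leftScore)), ?_, ?_⟩
    · rw [(sum_shift _ Dl X).1]; linarith [h1.2]
    · rw [(sum_shift _ H X).1]; linarith [h1.1, h1.2]
  rcases not_and_or.1 h234 with h2 | h34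
  · push_neg at h2
    have h5 : 0 < (H.sum (X.sum (mk [] [] (-(Dl.sum X).rightScore)))).rightScore := by
      rw [(sum_shift _ H X).2]; linarith [h2.1, h2.2]
    have h6 : (Dl.sum (X.sum (mk [] [] (-(Dl.sum X).rightScore)))).rightScore ≤ 0 := by
      rw [(sum_shift _ Dl X).2]; linarith [h2.2]
    obtain ⟨X', hp', hq'⟩ := conv_to_L hp_pos (fun x hx => le_of_lt hx) h5 h6
    exact ⟨X', hq', hp'⟩
  rcases not_and_or.1 h34 with h3 | h4
  · push_neg at h3; exact ⟨X, h3.2, h3.1⟩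
  · push_neg at h4
    obtain ⟨X', hp', hq'⟩ := conv_to_L hp_pos (fun x hx => le_of_lt hx) h4.1 h4.2
    exact ⟨X', hq', hp'⟩

/-- If `G = H` and a Left option `A` of `G` is neither dominated in `H` nor
reversible through `H`, we get a contradiction; hence some `A' ∈ L'` dominates. -/
lemma claim_L {L R L' R' : List SGame} {s s' : ℝ}
    (hSim : Sim (mk L R s) (mk L' R' s'))
    {A : SGame} (hA : A ∈ L)
    (hNr : ∀ Ar ∈ A.rightOpts, ¬ Le Ar (mk L' R' s')) :
    ∃ A' ∈ L', Ge A' A := by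
  by_contra hcon
  push_neg at hcon
  have hL' : L' ≠ [] := fun he => absurd (sim_left_empty hSim he ▸ hA) List.not_mem_nil
  have hT0 : ∀ A' : SGame, ∃ T, A' ∈ L' →
      (0 ≤ (A.sum T).leftScore ∧ (A'.sum T).leftScore < 0) := by
    intro A'
    by_cases hm : A' ∈ L'
    · obtain ⟨T, h1, h2⟩ := notGe_witL (hcon A' hm); exact ⟨T, fun _ => ⟨h1, h2⟩⟩
    · exact ⟨mk [] [] 0, fun hm' => absurd hm' hm⟩
  choose T hT using hT0
  have hY0 : ∀ Ar : SGame, ∃ Y, Ar ∈ A.rightOpts →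
      (0 ≤ (Ar.sum Y).rightScore ∧ ((mk L' R' s').sum Y).rightScore < 0) := by
    intro Ar
    by_cases hm : Ar ∈ A.rightOpts
    · obtain ⟨Y, h1, h2⟩ := notLe_witR (hNr Ar hm); exact ⟨Y, fun _ => ⟨h1, h2⟩⟩
    · exact ⟨mk [] [] 0, fun hm' => absurd hm' hm⟩
  choose Y hY using hY0
  set X : SGame := mk (A.rightOpts.map Y) (L'.map T) 0 with hX
  have h1 : 0 ≤ ((mk L R s).sum X).leftScore := by
    refine ls_nonneg_iff.2 (Or.inr ⟨A.sum X, mem_sum_ll' hA, ?_⟩)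
    refine rs_nonneg_iff.2 ⟨?_, ?_⟩
    · intro hemp
      have := (sum_rightOpts_nil.1 hemp).2
      rw [hX] at this
      simp only [rightOpts_mk, List.map_eq_nil_iff] at this
      exact absurd this hL'
    · intro Q hQ
      rcases sum_rightOpts_cases hQ with ⟨Ar, hAr, rfl⟩ | ⟨W, hW, rfl⟩
      · refine ls_nonneg_iff.2 (Or.inr ⟨Ar.sum (Y Ar), mem_sum_lc ?_, (hY Ar hAr).1⟩)
        rw [hX]; simp only [leftOpts_mk]
        exact List.mem_map_of_mem hAr
      · rw [hX] at hW; simp only [rightOpts_mk] at hW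
        rcases List.mem_map.1 hW with ⟨A', hA', rfl⟩
        exact (hT A' hA').1
  have h2 : ((mk L' R' s').sum X).leftScore < 0 := by
    rw [ls_neg_iff]
    refine ⟨fun hemp => absurd hemp (ne_nil_sum_left hL'), ?_⟩
    intro Q hQ
    rcases sum_leftOpts_cases hQ with ⟨A', hA', rfl⟩ | ⟨W, hW, rfl⟩
    · have hA'' : A' ∈ L' := by simpa using hA'
      refine rs_neg_iff.2 (Or.inr ⟨A'.sum (T A'), mem_sum_rc ?_, (hT A' hA'').2⟩)
      rw [hX]; simp only [rightOpts_mk]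
      exact List.mem_map_of_mem hA''
    · rw [hX] at hW; simp only [leftOpts_mk] at hW
      rcases List.mem_map.1 hW with ⟨Ar, hAr, rfl⟩
      exact (hY Ar hAr).2
  exact absurd ((hSim X).1.1 h1) (not_le.2 h2)

/-- Mirror of `claim_L` for Right options. -/
lemma claim_R {L R L' R' : List SGame} {s s' : ℝ}
    (hSim : Sim (mk L R s) (mk L' R' s'))
    {D : SGame} (hD : D ∈ R)
    (hNl : ∀ Dl ∈ D.leftOpts, ¬ Ge Dl (mk L' R' s')) :
    ∃ D' ∈ R', Le D' D := by
  by_contra hcon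
  push_neg at hcon
  have hR' : R' ≠ [] := fun he => absurd (sim_right_empty hSim he ▸ hD) List.not_mem_nil
  have hT0 : ∀ D' : SGame, ∃ T, D' ∈ R' →
      ((D.sum T).rightScore ≤ 0 ∧ 0 < (D'.sum T).rightScore) := by
    intro D'
    by_cases hm : D' ∈ R'
    · obtain ⟨T, h1, h2⟩ := notLe_witR' (hcon D' hm); exact ⟨T, fun _ => ⟨h1, h2⟩⟩
    · exact ⟨mk [] [] 0, fun hm' => absurd hm' hm⟩
  choose T hT using hT0
  have hY0 : ∀ Dl : SGame, ∃ Y, Dl ∈ D.leftOpts →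
      ((Dl.sum Y).leftScore ≤ 0 ∧ 0 < ((mk L' R' s').sum Y).leftScore) := by
    intro Dl
    by_cases hm : Dl ∈ D.leftOpts
    · obtain ⟨Y, h1, h2⟩ := notGe_witL' (hNl Dl hm); exact ⟨Y, fun _ => ⟨h1, h2⟩⟩
    · exact ⟨mk [] [] 0, fun hm' => absurd hm' hm⟩
  choose Y hY using hY0
  set X : SGame := mk (R'.map T) (D.leftOpts.map Y) 0 with hX
  have h1 : ((mk L R s).sum X).rightScore ≤ 0 := by
    refine rs_nonpos_iff.2 (Or.inr ⟨D.sum X, mem_sum_rl' hD, ?_⟩)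
    refine ls_nonpos_iff.2 ⟨?_, ?_⟩
    · intro hemp
      have := (sum_leftOpts_nil.1 hemp).2
      rw [hX] at this
      simp only [leftOpts_mk, List.map_eq_nil_iff] at this
      exact absurd this hR'
    · intro Q hQ
      rcases sum_leftOpts_cases hQ with ⟨Dl, hDl, rfl⟩ | ⟨W, hW, rfl⟩
      · refine rs_nonpos_iff.2 (Or.inr ⟨Dl.sum (Y Dl), mem_sum_rc ?_, (hY Dl hDl).1⟩)
        rw [hX]; simp only [rightOpts_mk]
        exact List.mem_map_of_mem hDl
      · rw [hX] at hW; simp only [leftOpts_mk] at hW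
        rcases List.mem_map.1 hW with ⟨D', hD', rfl⟩
        exact (hT D' hD').1
  have h2 : 0 < ((mk L' R' s').sum X).rightScore := by
    rw [rs_pos_iff]
    refine ⟨fun hemp => absurd hemp (ne_nil_sum_right hR'), ?_⟩
    intro Q hQ
    rcases sum_rightOpts_cases hQ with ⟨D', hD', rfl⟩ | ⟨W, hW, rfl⟩
    · have hD'' : D' ∈ R' := by simpa using hD'
      refine ls_pos_iff.2 (Or.inr ⟨D'.sum (T D'), mem_sum_lc ?_, (hT D' hD'').2⟩)
      rw [hX]; simp only [leftOpts_mk]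
      exact List.mem_map_of_mem hD''
    · rw [hX] at hW; simp only [rightOpts_mk] at hW
      rcases List.mem_map.1 hW with ⟨Dl, hDl, rfl⟩
      exact (hY Dl hDl).2
  exact absurd ((hSim X).2.2.2.2 h2) (not_lt.2 h1)

lemma le_trans' {G H K : SGame} (h1 : Le G H) (h2 : Le H K) : Le G K := by
  rw [le_iff_tr] at *
  exact fun X => tr_trans (h1 X) (h2 X)

/-- Equal canonical forms are equivalent. -/
theorem canonical_sim_equiv : ∀ (G H : SGame), Canonical G → Canonical H → Sim G H → Equiv G H
  | mk L R s, mk L' R' s' => fun hG hH hSim => by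
    rw [Canonical] at hG hH
    obtain ⟨gd1, gd2, gr1, gr2, gc1, gc2⟩ := hG
    obtain ⟨hd1, hd2, hr1, hr2, hc1, hc2⟩ := hH
    rw [Equiv]
    refine ⟨fun hc => sim_score hSim hc, ?_, ?_, ?_, ?_⟩
    · rintro ⟨A, hA⟩ -
      have hNr : ∀ Ar ∈ A.rightOpts, ¬ Le Ar (mk L' R' s') :=
        fun Ar hAr hle => gr1 A hA Ar hAr (le_congr (sim_symm hSim) hle)
      obtain ⟨A', hA', hGe1⟩ := claim_L hSim hA hNr
      have hNr' : ∀ Ar ∈ A'.rightOpts, ¬ Le Ar (mk L R s) :=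
        fun Ar hAr hle => hr1 A' hA' Ar hAr (le_congr hSim hle)
      obtain ⟨A'', hA'', hGe2⟩ := claim_L (sim_symm hSim) hA' hNr'
      have hAA : A'' = A := by
        by_contra hne
        exact gd1 A'' hA'' A hA hne (ge_trans hGe2 hGe1)
      rw [hAA] at hGe2
      have hSimAA' : Sim A A' := fun X => ⟨ge_iff_tr.1 hGe1 X, ge_iff_tr.1 hGe2 X⟩
      exact ⟨⟨A', hA'⟩, List.mem_attach _ _,
        canonical_sim_equiv A A' (gc1 ⟨A, hA⟩ (List.mem_attach _ _))
          (hc1 ⟨A', hA'⟩ (List.mem_attach _ _)) hSimAA'⟩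
    · rintro ⟨A', hA'⟩ -
      have hNr' : ∀ Ar ∈ A'.rightOpts, ¬ Le Ar (mk L R s) :=
        fun Ar hAr hle => hr1 A' hA' Ar hAr (le_congr hSim hle)
      obtain ⟨A, hA, hGe1⟩ := claim_L (sim_symm hSim) hA' hNr'
      have hNr : ∀ Ar ∈ A.rightOpts, ¬ Le Ar (mk L' R' s') :=
        fun Ar hAr hle => gr1 A hA Ar hAr (le_congr (sim_symm hSim) hle)
      obtain ⟨A'', hA'', hGe2⟩ := claim_L hSim hA hNr
      have hAA : A'' = A' := by
        by_contra hne
        exact hd1 A'' hA'' A' hA' hne (ge_trans hGe2 hGe1)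
      rw [hAA] at hGe2
      have hSimAA' : Sim A A' := fun X => ⟨ge_iff_tr.1 hGe2 X, ge_iff_tr.1 hGe1 X⟩
      exact ⟨⟨A, hA⟩, List.mem_attach _ _,
        canonical_sim_equiv A A' (gc1 ⟨A, hA⟩ (List.mem_attach _ _))
          (hc1 ⟨A', hA'⟩ (List.mem_attach _ _)) hSimAA'⟩
    · rintro ⟨D, hD⟩ -
      have hNl : ∀ Dl ∈ D.leftOpts, ¬ Ge Dl (mk L' R' s') :=
        fun Dl hDl hge => gr2 D hD Dl hDl (ge_congr (sim_symm hSim) hge)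
      obtain ⟨D', hD', hLe1⟩ := claim_R hSim hD hNl
      have hNl' : ∀ Dl ∈ D'.leftOpts, ¬ Ge Dl (mk L R s) :=
        fun Dl hDl hge => hr2 D' hD' Dl hDl (ge_congr hSim hge)
      obtain ⟨D'', hD'', hLe2⟩ := claim_R (sim_symm hSim) hD' hNl'
      have hDD : D'' = D := by
        by_contra hne
        exact gd2 D'' hD'' D hD hne (le_trans' hLe2 hLe1)
      rw [hDD] at hLe2
      have hSimDD' : Sim D D' := fun X => ⟨le_iff_tr.1 hLe2 X, le_iff_tr.1 hLe1 X⟩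
      exact ⟨⟨D', hD'⟩, List.mem_attach _ _,
        canonical_sim_equiv D D' (gc2 ⟨D, hD⟩ (List.mem_attach _ _))
          (hc2 ⟨D', hD'⟩ (List.mem_attach _ _)) hSimDD'⟩
    · rintro ⟨D', hD'⟩ -
      have hNl' : ∀ Dl ∈ D'.leftOpts, ¬ Ge Dl (mk L R s) :=
        fun Dl hDl hge => hr2 D' hD' Dl hDl (ge_congr hSim hge)
      obtain ⟨D, hD, hLe1⟩ := claim_R (sim_symm hSim) hD' hNl'
      have hNl : ∀ Dl ∈ D.leftOpts, ¬ Ge Dl (mk L' R' s') :=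
        fun Dl hDl hge => gr2 D hD Dl hDl (ge_congr (sim_symm hSim) hge)
      obtain ⟨D'', hD'', hLe2⟩ := claim_R hSim hD hNl
      have hDD : D'' = D' := by
        by_contra hne
        exact hd2 D'' hD'' D' hD' hne (le_trans' hLe2 hLe1)
      rw [hDD] at hLe2
      have hSimDD' : Sim D D' := fun X => ⟨le_iff_tr.1 hLe1 X, le_iff_tr.1 hLe2 X⟩
      exact ⟨⟨D, hD⟩, List.mem_attach _ _,
        canonical_sim_equiv D D' (gc2 ⟨D, hD⟩ (List.mem_attach _ _))
          (hc2 ⟨D', hD'⟩ (List.mem_attach _ _)) hSimDD'⟩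
termination_by G H => sizeOf G + sizeOf H
decreasing_by
  all_goals
    first
      | (have u1 := sizeOf_lt_of_mem_left (P := mk L R s)
           (show A ∈ (mk L R s).leftOpts by simpa using hA)
         have u2 := sizeOf_lt_of_mem_left (P := mk L' R' s')
           (show A' ∈ (mk L' R' s').leftOpts by simpa using hA')
         omega)
      | (have u1 := sizeOf_lt_of_mem_right (P := mk L R s)
           (show D ∈ (mk L R s).rightOpts by simpa using hD)
         have u2 := sizeOf_lt_of_mem_right (P := mk L' R' s')
           (show D' ∈ (mk L' R' s').rightOpts by simpa using hD')
         omega)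
end SGame

/-- Any two sequences of reductions of `G` terminating in canonical forms end
in equivalent games. -/
theorem reductions_confluent (G Gn Gm : SGame)
    (h1 : Relation.ReflTransGen SGame.Step G Gn)
    (h2 : Relation.ReflTransGen SGame.Step G Gm)
    (hGn : SGame.Canonical Gn) (hGm : SGame.Canonical Gm) :
    SGame.Equiv Gn Gm :=
  SGame.canonical_sim_equiv Gn Gm hGn hGm
    (SGame.sim_trans (SGame.sim_symm (SGame.rtg_sim h1)) (SGame.rtg_sim h2))
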